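/- arXiv:2107.14193 — 7 statements merged into one kernel-verified Lean document; each statement's English description precedes it below -/
import Mathlib

section
/- For every odd integer n with n ≥ 3, the infinite-speed cop number of the n×n grid satisfies c_∞(P_n □ P_n) ≤ n − 1. -/
open SimpleGraph

variable {V : Type*}

/-- Given cop positions `c`, the infinitely fast robber can move from `r` to `r'` iff
there is a walk in `G` from `r` to `r'` none of whose vertices (including the
endpoints) is occupied by a cop. -/
def RobberMove {k : ℕ} (G : SimpleGraph V) (c : Fin k → V) (r r' : V) : Prop :=
  ∃ w : G.Walk r r', ∀ v ∈ w.support, ∀ i, c i ≠ v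

/-- `c'` is a legal move of the cops from positions `c`: each cop either stays put
or moves to an adjacent vertex. -/
def CopMove {k : ℕ} (G : SimpleGraph V) (c c' : Fin k → V) : Prop :=
  ∀ i, c' i = c i ∨ G.Adj (c i) (c' i)

/-- With the cops at positions `c`, the robber at `r`, and the cops to move, the cops
can force capture of the infinitely fast robber after finitely many further rounds.
(If after the cops' move a cop stands on the robber's vertex, then the robber has no
legal move, so the hypothesis of `step` is vacuous: this is capture.  Well-foundedness
of the inductive predicate guarantees that capture occurs after finitely many rounds.) -/
inductive CopsCatch {k : ℕ} (G : SimpleGraph V) : (Fin k → V) → V → Prop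
  | step (c : Fin k → V) (r : V) (c' : Fin k → V) (hmove : CopMove G c c')
      (h : ∀ r', RobberMove G c' r r' → CopsCatch G c' r') : CopsCatch G c r

/-- `k` cops have a winning strategy on `G` against an infinitely fast robber:
they can choose initial positions such that, wherever the robber then starts,
they can force capture. -/
def CopsWin (G : SimpleGraph V) (k : ℕ) : Prop :=
  ∃ c₀ : Fin k → V, ∀ r₀ : V, CopsCatch G c₀ r₀

/-- The infinite-speed cop number of `G`: the least number of cops with a
winning strategy. -/
noncomputable def infCopNumber (G : SimpleGraph V) : ℕ :=
  sInf {k | CopsWin G k}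

/-! ### Auxiliary material for the proof -/

namespace InfCopsAux

/-- If a cop already stands on the robber's vertex, the cops catch (the robber has
no legal move, so staying put wins). -/
lemma catch_of_on {W : Type*} {G : SimpleGraph W} {k : ℕ} {c : Fin k → W} {r : W}
    (h : ∃ i, c i = r) : CopsCatch G c r := by
  obtain ⟨i, hi⟩ := h
  refine CopsCatch.step c r c (fun j => Or.inl rfl) ?_
  rintro r' ⟨w, hw⟩
  exact absurd hi (hw r w.start_mem_support i)

/-- Walks avoiding the cops stay inside a set whose boundary is covered by cops. -/
lemma confined_walk {W : Type*} {G : SimpleGraph W} {k : ℕ} {c : Fin k → W} {A : Set W}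
    (hA : ∀ v ∈ A, ∀ w, G.Adj v w → (∃ i, c i = w) ∨ w ∈ A) :
    ∀ {u v : W} (w : G.Walk u v), (∀ x ∈ w.support, ∀ i, c i ≠ x) → u ∈ A → v ∈ A := by
  intro u v w
  induction w with
  | nil => intro _ hu; exact hu
  | @cons a b d h p ih =>
      intro hsup hu
      have hb : b ∈ A := by
        rcases hA a hu b h with ⟨i, hi⟩ | hb
        · exact absurd hi
            (hsup b (by rw [SimpleGraph.Walk.support_cons];
                         exact List.mem_cons_of_mem _ p.start_mem_support) i)
        · exact hb
      exact ih (fun x hx i => hsup x (by rw [SimpleGraph.Walk.support_cons];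
                                          exact List.mem_cons_of_mem _ hx) i) hb

lemma confined {W : Type*} {G : SimpleGraph W} {k : ℕ} {c : Fin k → W} {A : Set W}
    (hA : ∀ v ∈ A, ∀ w, G.Adj v w → (∃ i, c i = w) ∨ w ∈ A)
    {r r' : W} (hr : r ∈ A) (hm : RobberMove G c r r') : r' ∈ A := by
  obtain ⟨w, hw⟩ := hm
  exact confined_walk hA w hw hr

/-- Transfer of `CopsCatch` along a graph isomorphism. -/
lemma copsCatch_map {W W' : Type*} {G : SimpleGraph W} {H : SimpleGraph W'}
    (f : G ≃g H) {k : ℕ} {c : Fin k → W} {r : W}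
    (h : CopsCatch G c r) : CopsCatch H (fun i => f (c i)) (f r) := by
  induction h with
  | @step c r c' hmove hrec ih =>
      refine CopsCatch.step _ _ (fun i => f (c' i)) ?_ ?_
      · intro i
        rcases hmove i with he | ha
        · exact Or.inl (congrArg f he)
        · exact Or.inr (f.map_adj_iff.mpr ha)
      · rintro r' ⟨w, hw⟩
        have hsup : ∀ x ∈ ((w.map f.symm.toHom).copy
            (by simp : f.symm (f r) = r) rfl).support, ∀ i, c' i ≠ x := by
          intro x hx i hcx
          rw [SimpleGraph.Walk.support_copy, SimpleGraph.Walk.support_map] at hx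
          obtain ⟨u, hu, rfl⟩ := List.mem_map.mp hx
          exact hw u hu i (by simp [hcx])
        simpa using ih (f.symm r') ⟨_, hsup⟩

/-! ### The grid -/

/-- Adjacency in the grid, value form (forward direction). -/
lemma grid_adj {n : ℕ} {a b : Fin n × Fin n}
    (h : (pathGraph n □ pathGraph n).Adj a b) :
    (a.1.val = b.1.val ∧ (a.2.val + 1 = b.2.val ∨ b.2.val + 1 = a.2.val)) ∨
    (a.2.val = b.2.val ∧ (a.1.val + 1 = b.1.val ∨ b.1.val + 1 = a.1.val)) := by
  rw [SimpleGraph.boxProd_adj] at h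
  rcases h with ⟨h1, h2⟩ | ⟨h1, h2⟩
  · exact Or.inr ⟨congrArg Fin.val h2, pathGraph_adj.mp h1⟩
  · exact Or.inl ⟨congrArg Fin.val h2, pathGraph_adj.mp h1⟩

/-- Adjacency in the grid, value form (converse direction). -/
lemma grid_adj' {n : ℕ} {a b : Fin n × Fin n}
    (h : (a.1.val = b.1.val ∧ (a.2.val + 1 = b.2.val ∨ b.2.val + 1 = a.2.val)) ∨
         (a.2.val = b.2.val ∧ (a.1.val + 1 = b.1.val ∨ b.1.val + 1 = a.1.val))) :
    (pathGraph n □ pathGraph n).Adj a b := by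
  rw [SimpleGraph.boxProd_adj]
  rcases h with ⟨he, hd⟩ | ⟨he, hd⟩
  · exact Or.inr ⟨pathGraph_adj.mpr hd, Fin.ext he⟩
  · exact Or.inl ⟨pathGraph_adj.mpr hd, Fin.ext he⟩

lemma posext {n : ℕ} {a b : Fin n × Fin n}
    (h1 : a.1.val = b.1.val) (h2 : a.2.val = b.2.val) : a = b := by
  cases a; cases b
  simp only [Prod.mk.injEq]
  exact ⟨Fin.ext h1, Fin.ext h2⟩

/-- The initial cop configuration: two cops on each odd diagonal vertex. -/
def cops0 (n : ℕ) : Fin (n - 1) → Fin n × Fin n := fun ℓ =>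
  (⟨2 * (ℓ.val / 2) + 1, by have := ℓ.isLt; omega⟩,
   ⟨2 * (ℓ.val / 2) + 1, by have := ℓ.isLt; omega⟩)

/-- The sweeping wall: cop `ℓ` at `(ℓ, min (ℓ+k) (n-1))`; for `ℓ + k ≤ n-1` these
cover the whole diagonal `{y = x + k}`. -/
def copsU (n k : ℕ) : Fin (n - 1) → Fin n × Fin n := fun ℓ =>
  (⟨ℓ.val, by have := ℓ.isLt; omega⟩,
   ⟨min (ℓ.val + k) (n - 1), by have := ℓ.isLt; omega⟩)

/-- A vertex on the wall `{y = x + k}` is occupied by a cop of `copsU n k`. -/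
lemma wall_mem {n k : ℕ} (hk : 1 ≤ k) {r : Fin n × Fin n}
    (h : r.1.val + k = r.2.val) : ∃ i, copsU n k i = r := by
  have h2 := r.2.isLt
  refine ⟨⟨r.1.val, by omega⟩, posext rfl ?_⟩
  show min (r.1.val + k) (n - 1) = r.2.val
  omega

/-- Closure of the region `{y ≥ x + k + 1}` under moves avoiding `copsU n k`. -/
lemma closedU {n k : ℕ} (hk : 1 ≤ k) {v w : Fin n × Fin n}
    (hv : v.1.val + k + 1 ≤ v.2.val) (h : (pathGraph n □ pathGraph n).Adj v w) :
    (∃ i, copsU n k i = w) ∨ (w.1.val + k + 1 ≤ w.2.val) := by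
  have hval : w.1.val + k ≤ w.2.val := by
    rcases grid_adj h with ⟨he, h2 | h2⟩ | ⟨he, h1 | h1⟩ <;> omega
  rcases Nat.eq_or_lt_of_le hval with heq | hlt
  · exact Or.inl (wall_mem hk heq)
  · exact Or.inr hlt

/-- The sweep: with cops on the wall `{y = x + k}` and the robber strictly beyond it,
the cops catch. -/
lemma sweepU {n : ℕ} : ∀ fuel k, 1 ≤ k → n ≤ k + fuel →
    ∀ r : Fin n × Fin n, r.1.val + k + 1 ≤ r.2.val →
    CopsCatch (pathGraph n □ pathGraph n) (copsU n k) r := by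
  intro fuel
  induction fuel with
  | zero =>
      intro k hk hn r hr
      exact absurd hr (by have := r.2.isLt; omega)
  | succ fuel ih =>
      intro k hk hn r hr
      refine CopsCatch.step _ _ (copsU n (k + 1)) ?_ ?_
      · intro ℓ
        have hl := ℓ.isLt
        by_cases hcase : ℓ.val + k < n - 1
        · refine Or.inr (grid_adj' (Or.inl ⟨rfl, Or.inl ?_⟩))
          show min (ℓ.val + k) (n - 1) + 1 = min (ℓ.val + (k + 1)) (n - 1)
          omega
        · refine Or.inl (posext rfl ?_)
          show min (ℓ.val + (k + 1)) (n - 1) = min (ℓ.val + k) (n - 1)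
          omega
      · rintro r' hm
        by_cases hwall : r.1.val + (k + 1) = r.2.val
        · obtain ⟨w, hw⟩ := hm
          obtain ⟨i, hi⟩ := wall_mem (by omega) hwall
          exact absurd hi (hw r w.start_mem_support i)
        · have hr2 : r.1.val + (k + 1) + 1 ≤ r.2.val := by omega
          have hr' : r'.1.val + (k + 1) + 1 ≤ r'.2.val :=
            confined (A := {v : Fin n × Fin n | v.1.val + (k + 1) + 1 ≤ v.2.val})
              (fun v hv w hw => closedU (by omega) hv hw) hr2 hm
          exact ih (k + 1) (by omega) (by omega) r' hr'

/-- From the initial configuration, the cops catch a robber strictly above the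
diagonal. -/
lemma start_upper {n : ℕ} (hn : 3 ≤ n) {r : Fin n × Fin n}
    (hr : r.1.val < r.2.val) :
    CopsCatch (pathGraph n □ pathGraph n) (cops0 n) r := by
  refine CopsCatch.step _ _ (copsU n 1) ?_ ?_
  · intro ℓ
    have hl := ℓ.isLt
    refine Or.inr (grid_adj' ?_)
    rcases Nat.even_or_odd ℓ.val with ⟨t, ht⟩ | ⟨t, ht⟩
    · -- even ℓ: (ℓ+1, ℓ+1) → (ℓ, ℓ+1)
      refine Or.inr ⟨?_, Or.inr ?_⟩
      · show 2 * (ℓ.val / 2) + 1 = min (ℓ.val + 1) (n - 1); omega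
      · show ℓ.val + 1 = 2 * (ℓ.val / 2) + 1; omega
    · -- odd ℓ: (ℓ, ℓ) → (ℓ, ℓ+1)
      refine Or.inl ⟨?_, Or.inl ?_⟩
      · show 2 * (ℓ.val / 2) + 1 = ℓ.val; omega
      · show 2 * (ℓ.val / 2) + 1 + 1 = min (ℓ.val + 1) (n - 1); omega
  · rintro r' hm
    by_cases hwall : r.1.val + 1 = r.2.val
    · obtain ⟨w, hw⟩ := hm
      obtain ⟨i, hi⟩ := wall_mem le_rfl hwall
      exact absurd hi (hw r w.start_mem_support i)
    · have hr2 : r.1.val + 1 + 1 ≤ r.2.val := by omega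
      have hr' : r'.1.val + 1 + 1 ≤ r'.2.val :=
        confined (A := {v : Fin n × Fin n | v.1.val + 1 + 1 ≤ v.2.val})
          (fun v hv w hw => closedU le_rfl hv hw) hr2 hm
      exact sweepU n 1 le_rfl (by omega) r' hr'

/-- From the initial configuration, the cops catch a robber sitting on an even
diagonal vertex: they surround him using both adjacent doubled pairs, then step on. -/
lemma start_diag_even {n : ℕ} (hn : 3 ≤ n) (hodd : Odd n) {r : Fin n × Fin n}
    (hd : r.1.val = r.2.val) (hev : Even r.1.val) :
    CopsCatch (pathGraph n □ pathGraph n) (cops0 n) r := by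
  obtain ⟨⟨x, hxn⟩, ⟨y, hyn⟩⟩ := r
  have hxy : x = y := hd
  subst hxy
  have hev' : Even x := hev
  obtain ⟨m2, hm2⟩ := hodd
  obtain ⟨j, hj⟩ := hev'
  -- the robber's vertex
  set rob : Fin n × Fin n := ((⟨x, hxn⟩ : Fin n), (⟨x, hyn⟩ : Fin n)) with hrob
  have hrob1 : rob.1.val = x := rfl
  have hrob2 : rob.2.val = x := rfl
  -- the surrounding configuration
  set c' : Fin (n - 1) → Fin n × Fin n := fun ℓ =>
    if ℓ.val + 2 = x then ((⟨x - 1, by omega⟩ : Fin n), (⟨x, hxn⟩ : Fin n))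
    else if ℓ.val + 1 = x then ((⟨x, hxn⟩ : Fin n), (⟨x - 1, by omega⟩ : Fin n))
    else if h3 : ℓ.val = x then
      ((⟨x + 1, by have := ℓ.isLt; omega⟩ : Fin n), (⟨x, hxn⟩ : Fin n))
    else if h4 : ℓ.val = x + 1 then
      ((⟨x, hxn⟩ : Fin n), (⟨x + 1, by have := ℓ.isLt; omega⟩ : Fin n))
    else cops0 n ℓ with hc'
  -- evaluation lemmas for `c'`
  have ev1 : ∀ ℓ : Fin (n - 1), ℓ.val + 2 = x →
      c' ℓ = ((⟨x - 1, by omega⟩ : Fin n), (⟨x, hxn⟩ : Fin n)) := by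
    intro ℓ h; simp only [hc']; rw [if_pos h]
  have ev2 : ∀ ℓ : Fin (n - 1), ℓ.val + 2 ≠ x → ℓ.val + 1 = x →
      c' ℓ = ((⟨x, hxn⟩ : Fin n), (⟨x - 1, by omega⟩ : Fin n)) := by
    intro ℓ h0 h; simp only [hc']; rw [if_neg h0, if_pos h]
  have ev3 : ∀ ℓ : Fin (n - 1), ∀ h : ℓ.val = x,
      c' ℓ = ((⟨x + 1, by have := ℓ.isLt; omega⟩ : Fin n), (⟨x, hxn⟩ : Fin n)) := by
    intro ℓ h; simp only [hc']
    rw [if_neg (by omega), if_neg (by omega), dif_pos h]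
  have ev4 : ∀ ℓ : Fin (n - 1), ∀ h : ℓ.val = x + 1,
      c' ℓ = ((⟨x, hxn⟩ : Fin n), (⟨x + 1, by have := ℓ.isLt; omega⟩ : Fin n)) := by
    intro ℓ h; simp only [hc']
    rw [if_neg (by omega), if_neg (by omega), dif_neg (by omega), dif_pos h]
  have ev5 : ∀ ℓ : Fin (n - 1), ℓ.val + 2 ≠ x → ℓ.val + 1 ≠ x → ℓ.val ≠ x →
      ℓ.val ≠ x + 1 → c' ℓ = cops0 n ℓ := by
    intro ℓ h1 h2 h3 h4; simp only [hc']
    rw [if_neg h1, if_neg h2, dif_neg h3, dif_neg h4]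
  -- the robber is stuck at `rob` under `c'`
  have hstuck : ∀ v ∈ ({rob} : Set (Fin n × Fin n)), ∀ w,
      (pathGraph n □ pathGraph n).Adj v w →
      (∃ i, c' i = w) ∨ w ∈ ({rob} : Set (Fin n × Fin n)) := by
    intro v hv w hw
    rw [Set.mem_singleton_iff] at hv
    have hv1 : v.1.val = x := by rw [hv]
    have hv2 : v.2.val = x := by rw [hv]
    left
    have hw1 := w.1.isLt
    have hw2 := w.2.isLt
    rcases grid_adj hw with ⟨he, hd1 | hd1⟩ | ⟨he, hd1 | hd1⟩
    · -- w = (x, x+1)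
      obtain ⟨i, hi⟩ : ∃ i : Fin (n - 1), i.val = x + 1 := ⟨⟨x + 1, by omega⟩, rfl⟩
      refine ⟨i, ?_⟩
      rw [ev4 i hi]
      exact posext (show x = w.1.val by omega) (show x + 1 = w.2.val by omega)
    · -- w = (x, x-1)
      obtain ⟨i, hi⟩ : ∃ i : Fin (n - 1), i.val + 1 = x := ⟨⟨x - 1, by omega⟩, by
        show x - 1 + 1 = x; omega⟩
      refine ⟨i, ?_⟩
      rw [ev2 i (by omega) hi]
      exact posext (show x = w.1.val by omega) (show x - 1 = w.2.val by omega)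
    · -- w = (x+1, x)
      obtain ⟨i, hi⟩ : ∃ i : Fin (n - 1), i.val = x := ⟨⟨x, by omega⟩, rfl⟩
      refine ⟨i, ?_⟩
      rw [ev3 i hi]
      exact posext (show x + 1 = w.1.val by omega) (show x = w.2.val by omega)
    · -- w = (x-1, x)
      obtain ⟨i, hi⟩ : ∃ i : Fin (n - 1), i.val + 2 = x := ⟨⟨x - 2, by omega⟩, by
        show x - 2 + 2 = x; omega⟩
      refine ⟨i, ?_⟩
      rw [ev1 i hi]
      exact posext (show x - 1 = w.1.val by omega) (show x = w.2.val by omega)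
  refine CopsCatch.step _ _ c' ?_ ?_
  · -- legality of the surround move
    intro ℓ
    have hl := ℓ.isLt
    by_cases h1 : ℓ.val + 2 = x
    · rw [ev1 ℓ h1]
      refine Or.inr (grid_adj' (Or.inl ⟨?_, Or.inl ?_⟩))
      · show 2 * (ℓ.val / 2) + 1 = x - 1; omega
      · show 2 * (ℓ.val / 2) + 1 + 1 = x; omega
    · by_cases h2 : ℓ.val + 1 = x
      · rw [ev2 ℓ h1 h2]
        refine Or.inr (grid_adj' (Or.inr ⟨?_, Or.inl ?_⟩))
        · show 2 * (ℓ.val / 2) + 1 = x - 1; omega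
        · show 2 * (ℓ.val / 2) + 1 + 1 = x; omega
      · by_cases h3 : ℓ.val = x
        · rw [ev3 ℓ h3]
          refine Or.inr (grid_adj' (Or.inl ⟨?_, Or.inr ?_⟩))
          · show 2 * (ℓ.val / 2) + 1 = x + 1; omega
          · show x + 1 = 2 * (ℓ.val / 2) + 1; omega
        · by_cases h4 : ℓ.val = x + 1
          · rw [ev4 ℓ h4]
            refine Or.inr (grid_adj' (Or.inr ⟨?_, Or.inr ?_⟩))
            · show 2 * (ℓ.val / 2) + 1 = x + 1; omega
            · show x + 1 = 2 * (ℓ.val / 2) + 1; omega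
          · rw [ev5 ℓ h1 h2 h3 h4]
            exact Or.inl rfl
  · rintro r' hm'
    have hr' := confined hstuck (Set.mem_singleton _) hm'
    rw [Set.mem_singleton_iff] at hr'
    subst hr'
    -- capture configuration
    set c'' : Fin (n - 1) → Fin n × Fin n := fun ℓ =>
      if ℓ.val + 2 = x ∨ (x = 0 ∧ ℓ.val = 0) then rob else c' ℓ with hc''
    have evA : ∀ ℓ : Fin (n - 1), (ℓ.val + 2 = x ∨ (x = 0 ∧ ℓ.val = 0)) →
        c'' ℓ = rob := by
      intro ℓ h; simp only [hc'']; rw [if_pos h]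
    have evB : ∀ ℓ : Fin (n - 1), ¬(ℓ.val + 2 = x ∨ (x = 0 ∧ ℓ.val = 0)) →
        c'' ℓ = c' ℓ := by
      intro ℓ h; simp only [hc'']; rw [if_neg h]
    refine CopsCatch.step _ _ c'' ?_ ?_
    · intro ℓ
      by_cases hcap : ℓ.val + 2 = x ∨ (x = 0 ∧ ℓ.val = 0)
      · rw [evA ℓ hcap]
        rcases hcap with hcap | ⟨hx0, hcap⟩
        · rw [ev1 ℓ hcap]
          refine Or.inr (grid_adj' (Or.inr ⟨rfl, Or.inl ?_⟩))
          show x - 1 + 1 = x; omega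
        · rw [ev3 ℓ (by omega)]
          refine Or.inr (grid_adj' (Or.inr ⟨rfl, Or.inr ?_⟩))
          show x + 1 = x + 1; rfl
      · rw [evB ℓ hcap]
        exact Or.inl rfl
    · rintro r'' ⟨w, hw⟩
      by_cases hx0 : x = 0
      · obtain ⟨i, hi⟩ : ∃ i : Fin (n - 1), i.val = 0 := ⟨⟨0, by omega⟩, rfl⟩
        exact absurd (evA i (Or.inr ⟨hx0, hi⟩)) (hw rob w.start_mem_support i)
      · obtain ⟨i, hi⟩ : ∃ i : Fin (n - 1), i.val + 2 = x := ⟨⟨x - 2, by omega⟩, by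
          show x - 2 + 2 = x; omega⟩
        exact absurd (evA i (Or.inl hi)) (hw rob w.start_mem_support i)

end InfCopsAux


/-- For every odd `n ≥ 3`, the infinite-speed cop number of the
`n × n` grid `P_n □ P_n` is at most `n - 1`. -/
theorem infCopNumber_grid_le_of_odd (n : ℕ) (hodd : Odd n) (hn : 3 ≤ n) :
    infCopNumber (pathGraph n □ pathGraph n) ≤ n - 1 := by
  apply Nat.sInf_le
  refine ⟨InfCopsAux.cops0 n, ?_⟩
  intro r₀
  rcases lt_trichotomy r₀.1.val r₀.2.val with h | h | h
  · exact InfCopsAux.start_upper hn h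
  · rcases Nat.even_or_odd r₀.1.val with hev | hod
    · exact InfCopsAux.start_diag_even hn hodd h hev
    · -- the robber starts on a cop
      obtain ⟨j, hj⟩ := hod
      have h1 := r₀.1.isLt
      refine InfCopsAux.catch_of_on ⟨⟨r₀.1.val - 1, by omega⟩, ?_⟩
      refine InfCopsAux.posext ?_ ?_
      · show 2 * ((r₀.1.val - 1) / 2) + 1 = r₀.1.val; omega
      · show 2 * ((r₀.1.val - 1) / 2) + 1 = r₀.2.val; omega
  · have h1 := InfCopsAux.start_upper hn (r := (r₀.2, r₀.1)) h
    exact InfCopsAux.copsCatch_map (SimpleGraph.boxProdComm _ _) h1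
end

section
/- Let G be a finite simple graph and let H be a retract of G. Then the infinite-speed cop numbers satisfy c_∞(G) ≥ c_∞(H). -/
open SimpleGraph

variable {V : Type*}

/-- Let `G` be a finite simple graph and let `H` be a retract of `G`,
i.e. `H` is a subgraph of `G` (on a vertex set `s ⊆ V`) for which there is a graph
homomorphism `φ : G → H` fixing every vertex of `H`.  Then `c_∞(G) ≥ c_∞(H)`. -/
theorem infCopNumber_le_of_retract {V : Type*} [Fintype V] (G : SimpleGraph V)
    (s : Set V) (H : SimpleGraph s)
    (hsub : ∀ u v : s, H.Adj u v → G.Adj u v)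
    (φ : G →g H) (hφ : ∀ v : s, φ (v : V) = v) :
    infCopNumber H ≤ infCopNumber G := by
  -- the inclusion homomorphism H →g G
  let ι : H →g G := ⟨Subtype.val, fun {u v} h => hsub u v h⟩
  -- key transfer lemma
  have key : ∀ {k : ℕ} (c : Fin k → V) (r : V), CopsCatch G c r →
      ∀ hr : r ∈ s, CopsCatch H (fun i => φ (c i)) ⟨r, hr⟩ := by
    intro k c r hcatch
    induction hcatch with
    | step c r c' hmove h ih =>
      intro hr
      refine CopsCatch.step _ _ (fun i => φ (c' i)) ?_ ?_
      · intro i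
        rcases hmove i with h1 | h1
        · exact Or.inl (show φ (c' i) = φ (c i) from by rw [h1])
        · exact Or.inr (φ.map_adj h1)
      · rintro r' ⟨w, hw⟩
        have hmoveG : RobberMove G c' r r'.1 := by
          refine ⟨w.map ι, ?_⟩
          intro v hv i hvi
          rw [SimpleGraph.Walk.support_map] at hv
          obtain ⟨u, hu, rfl⟩ := List.mem_map.1 hv
          exact hw u hu i (show φ (c' i) = u from by rw [hvi]; exact hφ u)
        have := ih r'.1 hmoveG r'.2
        simpa using this
  have hsubset : {k | CopsWin G k} ⊆ {k | CopsWin H k} := by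
    rintro k ⟨c₀, hc₀⟩
    refine ⟨fun i => φ (c₀ i), fun r₀ => ?_⟩
    have := key c₀ r₀.1 (hc₀ r₀.1) r₀.2
    simpa using this
  have hne : {k | CopsWin G k}.Nonempty := by
    refine ⟨Fintype.card V, (Fintype.equivFin V).symm, fun r₀ => ?_⟩
    refine CopsCatch.step _ _ _ (fun i => Or.inl rfl) ?_
    rintro r' ⟨w, hw⟩
    exact (hw r' w.end_mem_support ((Fintype.equivFin V) r') (by simp)).elim
  exact csInf_le_csInf (OrderBot.bddBelow _) hne hsubset
end

section
/- For every real ε > 0 there is an N such that for every integer n ≥ N, the infinite-speed cop number of the n×n×n grid satisfies c_∞(P_n □ P_n □ P_n) ≤ (3/4 + ε)·n² (as real numbers); i.e., c_∞(P_n □ P_n □ P_n) ≤ (0.75 + o(1))n². -/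
open SimpleGraph

variable {V : Type*}

section Aux
open Finset

/-! ### An abstract sweeping criterion for the cops to win -/

/-- If `ρ` is a rank function changing by exactly one along edges, bounded by `B`, and there
is a family of cop trajectories `f i` (each moving by at most one step per unit time) such
that every vertex `v` is occupied by some cop at time `ρ v`, then the cops win: they sweep
the level sets `ρ = t` in increasing order of `t` and the robber can never cross back. -/
lemma sweep_win (G : SimpleGraph V) (ρ : V → ℕ) (B : ℕ) {k : ℕ}
    (hadj : ∀ u v, G.Adj u v → ρ u = ρ v + 1 ∨ ρ v = ρ u + 1)
    (hB : ∀ v, ρ v ≤ B)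
    (f : Fin k → ℕ → V)
    (hmove : ∀ i t, f i (t + 1) = f i t ∨ G.Adj (f i t) (f i (t + 1)))
    (hcover : ∀ v, ∃ i, f i (ρ v) = v) :
    CopsWin G k := by
  have walkLem : ∀ (m : ℕ) {u u' : V} (w : G.Walk u u'),
      (∀ v ∈ w.support, ρ v ≠ m) → m < ρ u → m < ρ u' := by
    intro m u u' w
    induction w with
    | nil => intro _ h; exact h
    | @cons a v u' hadj' p ih =>
      intro hsup hu
      apply ih
      · intro x hx; exact hsup x (by simp [hx])
      · have h1 := hadj _ _ hadj'
        have h2 : ρ v ≠ m := hsup v (by simp [SimpleGraph.Walk.start_mem_support])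
        omega
  have main : ∀ d t r, B + 1 ≤ t + d → t ≤ ρ r →
      CopsCatch G (fun i => f i t) r := by
    intro d
    induction d with
    | zero => intro t r h1 h2; exact absurd (hB r) (by omega)
    | succ d ih =>
      intro t r h1 h2
      rcases eq_or_lt_of_le h2 with he | hlt
      · refine CopsCatch.step _ _ (fun i => f i t) (fun i => Or.inl rfl) ?_
        rintro r' ⟨w, hw⟩
        obtain ⟨i, hi⟩ := hcover r
        have : f i t = r := by rw [he]; exact hi
        exact (hw r w.start_mem_support i this).elim
      · refine CopsCatch.step _ _ (fun i => f i (t + 1)) (fun i => hmove i t) ?_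
        rintro r' ⟨w, hw⟩
        have hne : ∀ v ∈ w.support, ρ v ≠ t + 1 := by
          intro v hv hveq
          obtain ⟨i, hi⟩ := hcover v
          rw [hveq] at hi
          exact hw v hv i hi
        have hstart : t + 1 < ρ r := by
          have := hne r w.start_mem_support
          omega
        have hend := walkLem (t + 1) w hne hstart
        exact ih (t + 1) r' (by omega) (by omega)
  exact ⟨fun i => f i 0, fun r₀ => main (B + 1) 0 r₀ (by omega) (Nat.zero_le _)⟩

/-! ### Hook paths: an explicit symmetric chain decomposition machinery -/

/-- Hook path in the grid `[0,A] × [0,B]` (here `A`, `B` denote the *maximal* coordinates),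
indexed by `b ≤ min A B`: it goes up the column `x = b` and then along the row `y = B - b`,
parametrized by the rank `s = x + y` and clamped at both ends. -/
def hk (A B b s : ℕ) : ℕ × ℕ :=
  if s ≤ b then (b, 0)
  else if s ≤ B then (b, s - b)
  else if s ≤ A + B - b then (b + (s - B), B - b)
  else (A, B - b)

lemma hk_bounds {A B b : ℕ} (hbA : b ≤ A) (hbB : b ≤ B) (s : ℕ) :
    (hk A B b s).1 ≤ A ∧ (hk A B b s).2 ≤ B := by
  unfold hk; split_ifs <;> simp <;> omega

lemma hk_step {A B b : ℕ} (hbA : b ≤ A) (hbB : b ≤ B) (s : ℕ) :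
    hk A B b (s + 1) = hk A B b s ∨
    hk A B b (s + 1) = ((hk A B b s).1 + 1, (hk A B b s).2) ∨
    hk A B b (s + 1) = ((hk A B b s).1, (hk A B b s).2 + 1) := by
  unfold hk; split_ifs <;> simp [Prod.ext_iff] <;> omega

lemma hk_cover {A B x y : ℕ} (hx : x ≤ A) (hy : y ≤ B) :
    (if x + y ≤ B then x else B - y) ≤ A ∧ (if x + y ≤ B then x else B - y) ≤ B ∧
      hk A B (if x + y ≤ B then x else B - y) (x + y) = (x, y) := by
  unfold hk; split_ifs <;> simp [Prod.ext_iff] <;> omega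

/-- The walk of cop `(a, b)` through the cube `[0, n-1]³`, parametrized by "plane time" `t`.
`a` indexes a hook chain in the `(x,y)`-grid; `b` indexes a hook chain in the
(position-along-hook-`a`) × `z` grid.  The walk visits each level `x + y + z = t`
at time `t` while it is active, and is clamped before and after. -/
def cubeWalk (n a b t : ℕ) : ℕ × ℕ × ℕ :=
  ((hk (n - 1) (n - 1) a (a + (hk (2 * (n - 1 - a)) (n - 1) b (t - a)).1)).1,
   (hk (n - 1) (n - 1) a (a + (hk (2 * (n - 1 - a)) (n - 1) b (t - a)).1)).2,
   (hk (2 * (n - 1 - a)) (n - 1) b (t - a)).2)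

lemma cubeWalk_bounds {n a b : ℕ} (ha : a ≤ n - 1) (hbA : b ≤ 2 * (n - 1 - a))
    (hbB : b ≤ n - 1) (t : ℕ) :
    (cubeWalk n a b t).1 ≤ n - 1 ∧ (cubeWalk n a b t).2.1 ≤ n - 1 ∧
      (cubeWalk n a b t).2.2 ≤ n - 1 := by
  unfold cubeWalk
  have h1 := hk_bounds hbA hbB (t - a)
  have h2 := hk_bounds ha ha (a + (hk (2 * (n - 1 - a)) (n - 1) b (t - a)).1)
  exact ⟨h2.1, h2.2, h1.2⟩

/-- Each step of a cube walk either stays put or increases exactly one coordinate by one. -/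
lemma cubeWalk_step {n a b : ℕ} (ha : a ≤ n - 1) (hbA : b ≤ 2 * (n - 1 - a))
    (hbB : b ≤ n - 1) (t : ℕ) :
    cubeWalk n a b (t + 1) = cubeWalk n a b t ∨
    cubeWalk n a b (t + 1) =
      ((cubeWalk n a b t).1 + 1, (cubeWalk n a b t).2.1, (cubeWalk n a b t).2.2) ∨
    cubeWalk n a b (t + 1) =
      ((cubeWalk n a b t).1, (cubeWalk n a b t).2.1 + 1, (cubeWalk n a b t).2.2) ∨
    cubeWalk n a b (t + 1) =
      ((cubeWalk n a b t).1, (cubeWalk n a b t).2.1, (cubeWalk n a b t).2.2 + 1) := by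
  rcases le_or_gt (t + 1) a with h | h
  · left
    unfold cubeWalk
    have e : t + 1 - a = t - a := by omega
    rw [e]
  · have e : t + 1 - a = (t - a) + 1 := by omega
    unfold cubeWalk
    rw [e]
    rcases hk_step hbA hbB (t - a) with hq | hq | hq
    · left; rw [hq]
    · rw [hq]
      have e2 : a + ((hk (2 * (n - 1 - a)) (n - 1) b (t - a)).1 + 1,
            (hk (2 * (n - 1 - a)) (n - 1) b (t - a)).2).1
          = (a + (hk (2 * (n - 1 - a)) (n - 1) b (t - a)).1) + 1 := by simp; omega
      rw [e2]
      rcases hk_step ha ha (a + (hk (2 * (n - 1 - a)) (n - 1) b (t - a)).1) with hxy | hxy | hxy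
      · left; rw [hxy]
      · right; left; rw [hxy]
      · right; right; left; rw [hxy]
    · right; right; right; rw [hq]

/-- Every point of the cube is visited at its own rank time by one of the cube walks. -/
lemma cubeWalk_cover {n x y z : ℕ} (hx : x ≤ n - 1) (hy : y ≤ n - 1) (hz : z ≤ n - 1) :
    ∃ a b, a ≤ n - 1 ∧ b ≤ 2 * (n - 1 - a) ∧ b ≤ n - 1 ∧
      cubeWalk n a b (x + y + z) = (x, y, z) := by
  set a := if x + y ≤ n - 1 then x else n - 1 - y with hadef
  obtain ⟨haA, haB, hahk⟩ := hk_cover (A := n - 1) (B := n - 1) hx hy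
  set p := x + y - a with hpdef
  have hap : a ≤ x + y := by rw [hadef]; split_ifs <;> omega
  have hpA : p ≤ 2 * (n - 1 - a) := by
    rw [hpdef, hadef]; split_ifs <;> omega
  obtain ⟨hbA, hbB, hbhk⟩ := hk_cover (A := 2 * (n - 1 - a)) (B := n - 1) hpA hz
  refine ⟨a, _, haA, hbA, hbB, ?_⟩
  unfold cubeWalk
  have e1 : x + y + z - a = p + z := by omega
  rw [e1, hbhk]
  have e2 : a + p = x + y := by omega
  simp only [e2, hahk]
  rw [hadef, hahk]

/-! ### The cop team and its size -/

/-- Index set for the cops: `a` is the index of a hook in the `(x,y)`-grid (whose length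
is `2*(n-1-a)+1`), and `b ≤ min (2*(n-1-a)) (n-1)` indexes a hook in the corresponding
hook × `z` grid.  Its cardinality is `∑_{j<n} min (2j+1) n ≈ 3n²/4`. -/
def copSet (n : ℕ) : Finset (Fin n × Fin n) :=
  univ.filter (fun ab => (ab.2 : ℕ) ≤ 2 * (n - 1 - (ab.1 : ℕ)))

lemma mem_copSet {n : ℕ} (ab : Fin n × Fin n) :
    ab ∈ copSet n ↔ (ab.2 : ℕ) ≤ 2 * (n - 1 - (ab.1 : ℕ)) := by
  simp [copSet]

lemma sum_odds (h : ℕ) : ∑ j ∈ range h, (2 * j + 1) = h ^ 2 := by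
  induction h with
  | zero => simp
  | succ h ih => rw [Finset.sum_range_succ, ih]; ring

lemma copSet_card (n : ℕ) : 4 * (copSet n).card ≤ 3 * n ^ 2 + 1 := by
  have h1 : (copSet n).card
      = ∑ a : Fin n, ((copSet n).filter fun ab => ab.1 = a).card :=
    Finset.card_eq_sum_card_fiberwise (fun x _ => Finset.mem_univ x.1)
  have h2 : ∀ a : Fin n, ((copSet n).filter fun ab => ab.1 = a).card
      ≤ min (2 * (n - 1 - (a : ℕ)) + 1) n := by
    intro a
    have hle : ((copSet n).filter fun ab => ab.1 = a).card
        ≤ (Finset.range (min (2 * (n - 1 - (a : ℕ)) + 1) n)).card := by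
      apply Finset.card_le_card_of_injOn (fun ab => (ab.2 : ℕ))
      · intro ab hab
        obtain ⟨hab1, hab2⟩ := Finset.mem_filter.mp hab
        have hc : (ab.2 : ℕ) ≤ 2 * (n - 1 - (ab.1 : ℕ)) := (mem_copSet ab).mp hab1
        have hlt := ab.2.isLt
        rw [hab2] at hc
        simp only [Finset.mem_range]
        have hgoal : (ab.2 : ℕ) < min (2 * (n - 1 - (a : ℕ)) + 1) n := by omega
        simpa using hgoal
      · intro ab hab ab' hab' h
        obtain ⟨-, hab2⟩ := Finset.mem_filter.mp (Finset.mem_coe.mp hab)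
        obtain ⟨-, hab2'⟩ := Finset.mem_filter.mp (Finset.mem_coe.mp hab')
        ext
        · rw [hab2, hab2']
        · exact h
    simpa using hle
  have h3 : (copSet n).card ≤ ∑ a : Fin n, min (2 * (n - 1 - (a : ℕ)) + 1) n := by
    rw [h1]; exact Finset.sum_le_sum fun a _ => h2 a
  have h4 : ∑ a : Fin n, min (2 * (n - 1 - (a : ℕ)) + 1) n
      = ∑ j ∈ range n, min (2 * j + 1) n := by
    rw [Fin.sum_univ_eq_sum_range (fun i => min (2 * (n - 1 - i) + 1) n) n]
    exact Finset.sum_range_reflect (fun j => min (2 * j + 1) n) n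
  set h := n / 2 with hh
  have hsplit : ∑ j ∈ range n, min (2 * j + 1) n
      = ∑ j ∈ Finset.Ico 0 h, min (2 * j + 1) n
        + ∑ j ∈ Finset.Ico h n, min (2 * j + 1) n := by
    rw [Finset.sum_Ico_consecutive _ (Nat.zero_le h) (Nat.div_le_self n 2),
      Finset.range_eq_Ico]
  have h5 : ∑ j ∈ Finset.Ico 0 h, min (2 * j + 1) n ≤ h ^ 2 := by
    rw [← Finset.range_eq_Ico, ← sum_odds h]
    exact Finset.sum_le_sum fun j _ => min_le_left _ _
  have h6 : ∑ j ∈ Finset.Ico h n, min (2 * j + 1) n ≤ (n - h) * n := by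
    calc ∑ j ∈ Finset.Ico h n, min (2 * j + 1) n ≤ ∑ _j ∈ Finset.Ico h n, n :=
          Finset.sum_le_sum fun j _ => min_le_right _ _
      _ = (n - h) * n := by rw [Finset.sum_const, Nat.card_Ico, smul_eq_mul]
  have h7 : (copSet n).card ≤ h ^ 2 + (n - h) * n := by omega
  rcases Nat.even_or_odd n with ⟨c, hc⟩ | ⟨c, hc⟩
  · have hhc : h = c := by omega
    subst hc; rw [hhc] at h7
    have e : c + c - c = c := by omega
    rw [e] at h7
    nlinarith
  · have hhc : h = c := by omega
    subst hc; rw [hhc] at h7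
    have e : 2 * c + 1 - c = c + 1 := by omega
    rw [e] at h7
    nlinarith

/-! ### The cop strategy on the grid -/

/-- Packaging a triple of naturals (at most `n-1` each) as a vertex of the grid. -/
def toV {n : ℕ} (hn : 0 < n) (p : ℕ × ℕ × ℕ) : (Fin n × Fin n) × Fin n :=
  ((⟨min p.1 (n - 1), by omega⟩, ⟨min p.2.1 (n - 1), by omega⟩), ⟨min p.2.2 (n - 1), by omega⟩)

lemma grid_adj {n : ℕ} (hn : 0 < n) {p q : ℕ × ℕ × ℕ}
    (hp : p.1 ≤ n - 1 ∧ p.2.1 ≤ n - 1 ∧ p.2.2 ≤ n - 1)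
    (hq : q.1 ≤ n - 1 ∧ q.2.1 ≤ n - 1 ∧ q.2.2 ≤ n - 1)
    (h : q = (p.1 + 1, p.2.1, p.2.2) ∨ q = (p.1, p.2.1 + 1, p.2.2) ∨
         q = (p.1, p.2.1, p.2.2 + 1)) :
    (boxProd (boxProd (pathGraph n) (pathGraph n)) (pathGraph n)).Adj (toV hn p) (toV hn q) := by
  obtain ⟨p1, p2, p3⟩ := p
  obtain ⟨q1, q2, q3⟩ := q
  simp only [Prod.ext_iff] at h
  obtain ⟨hp1, hp2, hp3⟩ := hp
  obtain ⟨hq1, hq2, hq3⟩ := hq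
  simp only at hp1 hp2 hp3 hq1 hq2 hq3
  have e1 : min p1 (n - 1) = p1 := min_eq_left hp1
  have e2 : min p2 (n - 1) = p2 := min_eq_left hp2
  have e3 : min p3 (n - 1) = p3 := min_eq_left hp3
  have f1 : min q1 (n - 1) = q1 := min_eq_left hq1
  have f2 : min q2 (n - 1) = q2 := min_eq_left hq2
  have f3 : min q3 (n - 1) = q3 := min_eq_left hq3
  simp only [toV, SimpleGraph.boxProd_adj, SimpleGraph.pathGraph_adj, Prod.ext_iff,
    Fin.ext_iff, Fin.val_mk, e1, e2, e3, f1, f2, f3]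
  rcases h with ⟨h1, h2, h3⟩ | ⟨h1, h2, h3⟩ | ⟨h1, h2, h3⟩ <;> subst h1 <;> subst h2 <;>
    subst h3 <;> omega

lemma grid_copsWin {n : ℕ} (hn : 0 < n) :
    CopsWin (boxProd (boxProd (pathGraph n) (pathGraph n)) (pathGraph n)) (copSet n).card := by
  classical
  let e : {x // x ∈ copSet n} ≃ Fin (copSet n).card :=
    Fintype.equivFinOfCardEq (Fintype.card_coe (copSet n))
  refine sweep_win _ (fun v => ((v.1.1 : ℕ) + (v.1.2 : ℕ) + (v.2 : ℕ))) (3 * (n - 1))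
    ?_ ?_
    (fun j t => toV hn (cubeWalk n (((e.symm j : _) : Fin n × Fin n).1 : ℕ)
      (((e.symm j : _) : Fin n × Fin n).2 : ℕ) t)) ?_ ?_
  · rintro ⟨⟨x, y⟩, z⟩ ⟨⟨x', y'⟩, z'⟩ h
    simp only [SimpleGraph.boxProd_adj, SimpleGraph.pathGraph_adj, Prod.ext_iff,
      Fin.ext_iff] at h
    simp only []
    omega
  · rintro ⟨⟨x, y⟩, z⟩
    have hx := x.isLt; have hy := y.isLt; have hz := z.isLt
    simp only []
    omega
  · intro i t
    set s := (e.symm i : {x // x ∈ copSet n}) with hs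
    set a := ((s : Fin n × Fin n).1 : ℕ) with hadef
    set b := ((s : Fin n × Fin n).2 : ℕ) with hbdef
    have ha : a ≤ n - 1 := by have := (s : Fin n × Fin n).1.isLt; omega
    have hbB : b ≤ n - 1 := by have := (s : Fin n × Fin n).2.isLt; omega
    have hbA : b ≤ 2 * (n - 1 - a) := (mem_copSet _).mp s.2
    rcases cubeWalk_step ha hbA hbB t with h | h | h | h
    · left; rw [h]
    · right
      exact grid_adj hn (cubeWalk_bounds ha hbA hbB t)
        (cubeWalk_bounds ha hbA hbB (t + 1)) (Or.inl h)
    · right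
      exact grid_adj hn (cubeWalk_bounds ha hbA hbB t)
        (cubeWalk_bounds ha hbA hbB (t + 1)) (Or.inr (Or.inl h))
    · right
      exact grid_adj hn (cubeWalk_bounds ha hbA hbB t)
        (cubeWalk_bounds ha hbA hbB (t + 1)) (Or.inr (Or.inr h))
  · rintro ⟨⟨x, y⟩, z⟩
    obtain ⟨a, b, ha, hbA, hbB, heq⟩ := cubeWalk_cover
      (show (x : ℕ) ≤ n - 1 by have := x.isLt; omega)
      (show (y : ℕ) ≤ n - 1 by have := y.isLt; omega)
      (show (z : ℕ) ≤ n - 1 by have := z.isLt; omega)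
    have hmem2 : ((⟨a, by omega⟩ : Fin n), (⟨b, by omega⟩ : Fin n)) ∈ copSet n := by
      rw [mem_copSet]
      exact hbA
    refine ⟨e ⟨_, hmem2⟩, ?_⟩
    dsimp only
    rw [Equiv.symm_apply_apply]
    simp only [Fin.val_mk]
    rw [heq]
    have hx := x.isLt; have hy := y.isLt; have hz := z.isLt
    simp only [toV, Prod.ext_iff, Fin.ext_iff, Fin.val_mk]
    refine ⟨⟨?_, ?_⟩, ?_⟩ <;> simp <;> omega

end Aux

/-- For every `ε > 0` there is an `N` such that for all `n ≥ N`,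
`c_∞(P_n □ P_n □ P_n) ≤ (3/4 + ε) n²`; that is,
`c_∞(P_n □ P_n □ P_n) ≤ (0.75 + o(1)) n²`. -/
theorem infCopNumber_grid3_upper (ε : ℝ) (hε : 0 < ε) :
    ∃ N : ℕ, ∀ n : ℕ, N ≤ n →
      (infCopNumber (boxProd (boxProd (pathGraph n) (pathGraph n)) (pathGraph n)) : ℝ) ≤
        (3 / 4 + ε) * (n : ℝ) ^ 2 := by
  refine ⟨⌈ε⁻¹⌉₊ + 1, fun n hn => ?_⟩
  have hn1 : 0 < n := by omega
  have hwin : CopsWin (boxProd (boxProd (pathGraph n) (pathGraph n)) (pathGraph n)) (copSet n).card :=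
    grid_copsWin hn1
  have hle : infCopNumber (boxProd (boxProd (pathGraph n) (pathGraph n)) (pathGraph n)) ≤ (copSet n).card :=
    Nat.sInf_le hwin
  have hcard := copSet_card n
  -- pass to the reals
  have h1 : (infCopNumber (boxProd (boxProd (pathGraph n) (pathGraph n)) (pathGraph n)) : ℝ)
      ≤ ((copSet n).card : ℝ) := by exact_mod_cast hle
  have h2 : ((copSet n).card : ℝ) ≤ (3 * (n : ℝ) ^ 2 + 1) / 4 := by
    have : (4 : ℝ) * ((copSet n).card : ℝ) ≤ 3 * (n : ℝ) ^ 2 + 1 := by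
      exact_mod_cast hcard
    linarith
  have hεn : (1 : ℝ) ≤ ε * n := by
    have hceil : (ε⁻¹ : ℝ) ≤ (⌈ε⁻¹⌉₊ : ℕ) := Nat.le_ceil _
    have hNn : ((⌈ε⁻¹⌉₊ + 1 : ℕ) : ℝ) ≤ (n : ℝ) := by exact_mod_cast hn
    have hinv : (ε⁻¹ : ℝ) ≤ (n : ℝ) := by push_cast at hNn ⊢; linarith
    calc (1 : ℝ) = ε * ε⁻¹ := by field_simp
      _ ≤ ε * n := by nlinarith
  have hn2 : (1 : ℝ) ≤ (n : ℝ) := by exact_mod_cast hn1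
  have h3 : (3 * (n : ℝ) ^ 2 + 1) / 4 ≤ (3 / 4 + ε) * (n : ℝ) ^ 2 := by nlinarith
  linarith
end

section
/- Fix a real number c with 1/2 ≤ c ≤ 1, and for each even integer n ≥ 6 let m = ⌊c(n−1)⌋. Then, as n → ∞ through even integers, C_m(n/2−1, n/2−1, n)/n² → −c²/2 + c − 1/4 and S_m(n/2−1, n/2−1, n)/n³ → −c³/6 + c²/2 − c/4 + 1/24. -/
open Filter

/-- `C_m(a,b,c)`: the number of triples `(x, y, z)` with `0 ≤ x ≤ a - 1`,
`0 ≤ y ≤ b - 1`, `0 ≤ z ≤ c - 1`, and `x + y + z = m`. -/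
def C3 (a b c m : ℕ) : ℕ :=
  Fintype.card {p : Fin a × Fin b × Fin c // (p.1 : ℕ) + (p.2.1 : ℕ) + (p.2.2 : ℕ) = m}

/-- `S_m(a,b,c)`: the number of triples `(x, y, z)` with `0 ≤ x ≤ a - 1`,
`0 ≤ y ≤ b - 1`, `0 ≤ z ≤ c - 1`, and `x + y + z ≤ m`. -/
def S3 (a b c m : ℕ) : ℕ :=
  Fintype.card {p : Fin a × Fin b × Fin c // (p.1 : ℕ) + (p.2.1 : ℕ) + (p.2.2 : ℕ) ≤ m}

open Finset

namespace SliceAux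

def P2 (s m : ℕ) : ℕ :=
  (((range s) ×ˢ (range s)).filter (fun p => p.1 + p.2 ≤ m)).card

lemma E2_card (s k : ℕ) :
    (((range s) ×ˢ (range s)).filter (fun p => p.1 + p.2 = k)).card
      = min s (k+1) - (k+1-s) := by
  rw [← Nat.card_Ico]
  apply card_bij (fun (p : ℕ × ℕ) (_ : p ∈ _) => p.1)
  · rintro ⟨x, y⟩ h
    simp only [mem_filter, mem_product, mem_range] at h
    simp only [mem_Ico]
    omega
  · rintro ⟨x, y⟩ h1 ⟨x', y'⟩ h2 h
    simp only [mem_filter, mem_product, mem_range] at h1 h2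
    simp only at h
    ext <;> omega
  · intro x hx
    simp only [mem_Ico] at hx
    refine ⟨(x, k - x), ?_, rfl⟩
    simp only [mem_filter, mem_product, mem_range]
    omega

lemma card_filter_le {α : Type*} [DecidableEq α] (S : Finset α) (f : α → ℕ) (m : ℕ) :
    (S.filter (fun a => f a ≤ m)).card
      = ∑ k ∈ range (m+1), (S.filter (fun a => f a = k)).card := by
  induction m with
  | zero => simp [Nat.le_zero]
  | succ m ih =>
    have h : S.filter (fun a => f a ≤ m+1)
        = S.filter (fun a => f a ≤ m) ∪ S.filter (fun a => f a = m+1) := by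
      ext a
      simp only [mem_filter, mem_union]
      constructor
      · rintro ⟨ha, h2⟩
        rcases eq_or_lt_of_le h2 with h3 | h3
        · exact Or.inr ⟨ha, h3⟩
        · exact Or.inl ⟨ha, by omega⟩
      · rintro (⟨ha, h2⟩ | ⟨ha, h2⟩) <;> exact ⟨ha, by omega⟩
    have hdisj : Disjoint (S.filter (fun a => f a ≤ m)) (S.filter (fun a => f a = m+1)) := by
      rw [Finset.disjoint_left]
      intro a ha hb
      simp only [mem_filter] at ha hb
      omega
    rw [h, card_union_of_disjoint hdisj, ih]
    exact (sum_range_succ _ (m+1)).symm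

lemma P2_sum (s m : ℕ) :
    P2 s m = ∑ k ∈ range (m+1), (min s (k+1) - (k+1-s)) := by
  rw [P2]
  rw [card_filter_le ((range s) ×ˢ (range s)) (fun p => p.1 + p.2) m]
  exact sum_congr rfl fun k _ => E2_card s k

lemma P2_small (s k : ℕ) (h : k < s) : 2 * P2 s k = (k+1)*(k+2) := by
  rw [P2_sum]
  rw [sum_congr rfl (fun j hj => by
    simp only [mem_range] at hj
    show min s (j+1) - (j+1-s) = j + 1
    omega)]
  have h2 : ∑ j ∈ range (k+1), (j+1) = ∑ j ∈ range (k+2), j := by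
    rw [Finset.sum_range_succ' (fun j => j) (k+1)]
    simp
  have g : (∑ j ∈ range (k+2), j) * 2 = (k+2)*(k+1) := by
    simpa using Finset.sum_range_id_mul_two (k+2)
  rw [h2, mul_comm 2, g]
  ring

lemma P2_step (s m : ℕ) (h : s ≤ m + 1) :
    P2 s (m+1) = P2 s m + (2*s-2-m) := by
  rw [P2_sum, P2_sum, sum_range_succ]
  congr 1
  omega

lemma P2_formula (s m : ℕ) (h : s ≤ m + 1) :
    2 * P2 s m + (2*s-2-m)*(2*s-1-m) = 2*(s*s) := by
  have h' : s - 1 ≤ m := by omega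
  clear h
  induction m, h' using Nat.le_induction with
  | base =>
    rcases s with _ | k
    · simp [P2]
    · have e0 : (k+1) - 1 = k := by omega
      rw [e0]
      have e1 : 2*(k+1)-2-k = k := by omega
      have e2 : 2*(k+1)-1-k = k+1 := by omega
      rw [e1, e2, P2_small (k+1) k (by omega)]
      ring
  | succ m hm ih =>
    have hstep := P2_step s m (by omega)
    rcases Nat.lt_or_ge (m+1) (2*s-1) with hcase | hcase
    · have e1 : 2*s-2-m = (2*s-2-(m+1))+1 := by omega
      have e2 : 2*s-1-m = (2*s-2-(m+1))+2 := by omega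
      have e3 : 2*s-1-(m+1) = (2*s-2-(m+1))+1 := by omega
      rw [e1, e2] at ih
      rw [hstep, e1, e3]
      zify at ih ⊢
      linear_combination ih
    · have z : 2*s-2-m = 0 := by omega
      have z1 : 2*s-2-(m+1) = 0 := by omega
      rw [z, zero_mul] at ih
      rw [hstep, z, z1, zero_mul]
      omega


lemma tet (s : ℕ) : 3 * ∑ k ∈ range s, (k+1)*(k+2) = s*(s+1)*(s+2) := by
  induction s with
  | zero => simp
  | succ s ih =>
    rw [sum_range_succ, mul_add, ih]
    ring

lemma V2_formula (s m : ℕ) (h : s ≤ m + 1) :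
    6 * (∑ k ∈ range (m+1), P2 s k)
      = 6*(s*s)*(m+2-s) + (2*s-2-m)*((2*s-2-m)-1)*((2*s-2-m)+1) := by
  rcases Nat.eq_zero_or_pos s with hs | hs
  · subst hs
    simp [P2]
  have h' : s - 1 ≤ m := by omega
  clear h
  induction m, h' using Nat.le_induction with
  | base =>
    have hm1 : s - 1 + 1 = s := by omega
    rw [hm1]
    have h1 : ∑ k ∈ range s, 2 * P2 s k = ∑ k ∈ range s, (k+1)*(k+2) :=
      sum_congr rfl fun k hk => P2_small s k (mem_range.mp hk)
    have hsum : 6 * ∑ k ∈ range s, P2 s k = s*(s+1)*(s+2) := by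
      calc 6 * ∑ k ∈ range s, P2 s k = 3 * ∑ k ∈ range s, 2 * P2 s k := by
            simp only [Finset.mul_sum]
            exact sum_congr rfl fun k _ => by ring
        _ = 3 * ∑ k ∈ range s, (k+1)*(k+2) := by rw [h1]
        _ = s*(s+1)*(s+2) := tet s
    rw [hsum]
    obtain ⟨k, rfl⟩ : ∃ k, s = k + 1 := ⟨s - 1, by omega⟩
    have e1 : 2*(k+1)-2-(k+1-1) = k := by omega
    have e2 : (k+1)-1+2-(k+1) = 1 := by omega
    rw [e1, e2]
    rcases Nat.eq_zero_or_pos k with hk | hk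
    · subst hk; decide
    obtain ⟨j, rfl⟩ : ∃ j, k = j + 1 := ⟨k - 1, by omega⟩
    have e3 : (j+1) - 1 = j := by omega
    rw [e3]
    ring
  | succ m hm ih =>
    have hP := P2_formula s (m+1) (by omega)
    rw [sum_range_succ, mul_add]
    rcases Nat.lt_or_ge (m+2) (2*s-1) with hcase | hcase
    · -- d' = 2s-2-(m+1) ≥ 1
      obtain ⟨e, he⟩ : ∃ e, 2*s-2-(m+2) = e := ⟨_, rfl⟩
      have f1 : 2*s-2-(m+1) = e+1 := by omega
      have f2 : 2*s-2-m = e+2 := by omega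
      have f3 : (2*s-2-m)-1 = e+1 := by omega
      have f4 : (2*s-2-(m+1))-1 = e := by omega
      have f5 : 2*s-1-(m+1) = e+2 := by omega
      obtain ⟨q, hq⟩ : ∃ q, m+2-s = q := ⟨_, rfl⟩
      have f6 : m+1+2-s = q+1 := by omega
      rw [f3, f2, hq] at ih
      rw [f1, f5] at hP
      rw [f4, f1, f6]
      zify at ih hP ⊢
      linear_combination ih + 3*hP
    · -- degenerate: d' = 0
      have z1 : 2*s-2-(m+1) = 0 := by omega
      have z2 : (2*s-2-m)*((2*s-2-m)-1)*((2*s-2-m)+1) = 0 := by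
        have hz : (2*s-2-m) - 1 = 0 := by omega
        rw [hz]; simp
      have f6 : m+1+2-s = (m+2-s)+1 := by omega
      rw [z2] at ih
      rw [z1] at hP ⊢
      simp only [zero_mul, mul_zero, Nat.zero_sub, add_zero, zero_add] at ih hP ⊢
      rw [f6]
      zify at ih hP ⊢
      linear_combination ih + 3*hP

lemma C3_eq_card (a b c m : ℕ) :
    C3 a b c m = (((range a) ×ˢ (range b) ×ˢ (range c)).filter
      (fun p : ℕ × ℕ × ℕ => p.1 + p.2.1 + p.2.2 = m)).card := by
  rw [C3, Fintype.card_subtype]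
  apply card_bij (fun (p : Fin a × Fin b × Fin c) (_ : p ∈ _) =>
    ((p.1 : ℕ), (p.2.1 : ℕ), (p.2.2 : ℕ)))
  · rintro ⟨x, y, z⟩ h
    simp only [mem_filter, mem_univ, true_and] at h
    simp only [mem_filter, mem_product, mem_range]
    exact ⟨⟨x.isLt, y.isLt, z.isLt⟩, h⟩
  · rintro ⟨x, y, z⟩ h1 ⟨x', y', z'⟩ h2 h
    simp only [Prod.mk.injEq] at h
    ext
    · exact h.1
    · exact h.2.1
    · exact h.2.2
  · rintro ⟨x, y, z⟩ h
    simp only [mem_filter, mem_product, mem_range] at h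
    exact ⟨⟨⟨x, h.1.1⟩, ⟨y, h.1.2.1⟩, ⟨z, h.1.2.2⟩⟩, by simp [h.2], rfl⟩

lemma S3_eq_card (a b c m : ℕ) :
    S3 a b c m = (((range a) ×ˢ (range b) ×ˢ (range c)).filter
      (fun p : ℕ × ℕ × ℕ => p.1 + p.2.1 + p.2.2 ≤ m)).card := by
  rw [S3, Fintype.card_subtype]
  apply card_bij (fun (p : Fin a × Fin b × Fin c) (_ : p ∈ _) =>
    ((p.1 : ℕ), (p.2.1 : ℕ), (p.2.2 : ℕ)))
  · rintro ⟨x, y, z⟩ h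
    simp only [mem_filter, mem_univ, true_and] at h
    simp only [mem_filter, mem_product, mem_range]
    exact ⟨⟨x.isLt, y.isLt, z.isLt⟩, h⟩
  · rintro ⟨x, y, z⟩ h1 ⟨x', y', z'⟩ h2 h
    simp only [Prod.mk.injEq] at h
    ext
    · exact h.1
    · exact h.2.1
    · exact h.2.2
  · rintro ⟨x, y, z⟩ h
    simp only [mem_filter, mem_product, mem_range] at h
    exact ⟨⟨⟨x, h.1.1⟩, ⟨y, h.1.2.1⟩, ⟨z, h.1.2.2⟩⟩, by simp [h.2], rfl⟩

lemma triple_eq (s n m : ℕ) (hm : m < n) :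
    (((range s) ×ˢ (range s) ×ˢ (range n)).filter
      (fun p : ℕ × ℕ × ℕ => p.1 + p.2.1 + p.2.2 = m)).card = P2 s m := by
  rw [P2]
  apply card_bij (fun (p : ℕ × ℕ × ℕ) (_ : p ∈ _) => (p.1, p.2.1))
  · rintro ⟨x, y, z⟩ h
    simp only [mem_filter, mem_product, mem_range] at h
    simp only [mem_filter, mem_product, mem_range]
    omega
  · rintro ⟨x, y, z⟩ h1 ⟨x', y', z'⟩ h2 h
    simp only [mem_filter, mem_product, mem_range] at h1 h2
    simp only [Prod.mk.injEq] at h ⊢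
    omega
  · rintro ⟨x, y⟩ h
    simp only [mem_filter, mem_product, mem_range] at h
    refine ⟨(x, y, m - (x + y)), ?_, rfl⟩
    simp only [mem_filter, mem_product, mem_range]
    omega

lemma C3_formula (s n m : ℕ) (hm : m < n) (h : s ≤ m + 1) :
    2 * C3 s s n m + (2*s-2-m)*(2*s-1-m) = 2*(s*s) := by
  rw [C3_eq_card, triple_eq s n m hm]
  exact P2_formula s m h

lemma S3_formula (s n m : ℕ) (hm : m < n) (h : s ≤ m + 1) :
    6 * S3 s s n m
      = 6*(s*s)*(m+2-s) + (2*s-2-m)*((2*s-2-m)-1)*((2*s-2-m)+1) := by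
  rw [S3_eq_card, card_filter_le _ (fun p : ℕ × ℕ × ℕ => p.1 + p.2.1 + p.2.2) m]
  rw [sum_congr rfl (fun k hk => triple_eq s n k (by
    have := mem_range.mp hk; omega))]
  exact V2_formula s m h

end SliceAux



open SliceAux

set_option maxHeartbeats 1000000 in
/-- Fix a real `c` with `1/2 ≤ c ≤ 1` and, for each even `n = 2t`,
let `m = ⌊c(n-1)⌋`.  Then, as `n → ∞` through even integers,
`C_m(n/2-1, n/2-1, n)/n² → -c²/2 + c - 1/4` and
`S_m(n/2-1, n/2-1, n)/n³ → -c³/6 + c²/2 - c/4 + 1/24`. -/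
theorem slice_counts_quadrant (c : ℝ) (hc0 : 1 / 2 ≤ c) (hc1 : c ≤ 1) :
    Tendsto
      (fun t : ℕ => (C3 (t - 1) (t - 1) (2 * t) ⌊c * ((2 * t : ℝ) - 1)⌋₊ : ℝ) /
        (2 * t : ℝ) ^ 2) atTop (nhds (-c ^ 2 / 2 + c - 1 / 4)) ∧
    Tendsto
      (fun t : ℕ => (S3 (t - 1) (t - 1) (2 * t) ⌊c * ((2 * t : ℝ) - 1)⌋₊ : ℝ) /
        (2 * t : ℝ) ^ 3) atTop
      (nhds (-c ^ 3 / 6 + c ^ 2 / 2 - c / 4 + 1 / 24)) := by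
  have hc0' : (0:ℝ) ≤ c := by linarith
  set M : ℕ → ℕ := fun t => ⌊c * ((2 * t : ℝ) - 1)⌋₊ with hMdef
  set D : ℕ → ℕ := fun t => 2 * t - 4 - M t with hDdef
  have hDt : ∀ t, D t = 2 * t - 4 - M t := fun _ => rfl
  -- basic facts
  have fact : ∀ t : ℕ, 2 ≤ t →
      (M t : ℝ) ≤ c * (2 * t - 1) ∧ c * (2 * t - 1) < M t + 1 ∧
      t - 1 ≤ M t ∧ M t < 2 * t := by
    intro t ht
    have ht1 : (1:ℝ) ≤ (t:ℝ) := by exact_mod_cast Nat.one_le_of_lt ht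
    have hnn : (0:ℝ) ≤ c * (2 * t - 1) := by nlinarith
    have h1 : (M t : ℝ) ≤ c * (2 * t - 1) := Nat.floor_le hnn
    have h2 : c * (2 * t - 1) < M t + 1 := Nat.lt_floor_add_one _
    have h3 : t - 1 ≤ M t := by
      apply Nat.le_floor
      have : ((t - 1 : ℕ) : ℝ) = (t:ℝ) - 1 := by
        push_cast [Nat.cast_sub (by omega : 1 ≤ t)]; ring
      rw [this]
      nlinarith
    have h4 : M t < 2 * t := by
      have hle : (M t : ℝ) ≤ 2 * t - 1 := by nlinarith
      have : (M t : ℝ) < ((2 * t : ℕ) : ℝ) := by push_cast; linarith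
      exact_mod_cast this
    exact ⟨h1, h2, h3, h4⟩
  have hI : Tendsto (fun t : ℕ => 1 / (t:ℝ)) atTop (nhds 0) :=
    tendsto_one_div_atTop_nhds_zero_nat
  -- m/t → 2c
  have hM : Tendsto (fun t : ℕ => (M t : ℝ) / t) atTop (nhds (2*c)) := by
    apply tendsto_of_tendsto_of_tendsto_of_le_of_le'
      (g := fun t : ℕ => 2*c - (c+1)*(1/(t:ℝ))) (h := fun _ : ℕ => 2*c)
    · have : Tendsto (fun t : ℕ => 2*c - (c+1)*(1/(t:ℝ))) atTop (nhds (2*c - (c+1)*0)) :=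
        tendsto_const_nhds.sub (hI.const_mul (c+1))
      simpa using this
    · exact tendsto_const_nhds
    · filter_upwards [eventually_ge_atTop 2] with t ht
      obtain ⟨h1, h2, h3, h4⟩ := fact t ht
      have ht0 : (0:ℝ) < t := by exact_mod_cast (by omega : 0 < t) 
      rw [le_div_iff₀ ht0]
      have : (2*c - (c+1)*(1/(t:ℝ))) * t = 2*c*t - (c+1) := by field_simp
      rw [this]
      nlinarith
    · filter_upwards [eventually_ge_atTop 2] with t ht
      obtain ⟨h1, h2, h3, h4⟩ := fact t ht
      have ht0 : (0:ℝ) < t := by exact_mod_cast (by omega : 0 < t)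
      rw [div_le_iff₀ ht0]
      nlinarith
  -- D/t → 2 - 2c
  have hD : Tendsto (fun t : ℕ => (D t : ℝ) / t) atTop (nhds (2-2*c)) := by
    apply tendsto_of_tendsto_of_tendsto_of_le_of_le'
      (g := fun t : ℕ => (2-2*c) - 4*(1/(t:ℝ))) (h := fun _ : ℕ => 2-2*c)
    · have : Tendsto (fun t : ℕ => (2-2*c) - 4*(1/(t:ℝ))) atTop (nhds ((2-2*c) - 4*0)) :=
        tendsto_const_nhds.sub (hI.const_mul 4)
      simpa using this
    · exact tendsto_const_nhds
    · filter_upwards [eventually_ge_atTop 2] with t ht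
      obtain ⟨h1, h2, h3, h4⟩ := fact t ht
      have ht0 : (0:ℝ) < t := by exact_mod_cast (by omega : 0 < t)
      rw [le_div_iff₀ ht0]
      have heq : ((2-2*c) - 4*(1/(t:ℝ))) * t = (2-2*c)*t - 4 := by field_simp
      rw [heq]
      rcases le_or_gt (M t) (2*t-4) with hcase | hcase
      · have : (D t : ℝ) = 2*t - 4 - M t := by
          rw [hDt]
          push_cast [Nat.cast_sub hcase, Nat.cast_sub (by omega : 4 ≤ 2*t)]
          ring
        rw [this]
        nlinarith
      · have hD0 : (D t : ℝ) ≥ 0 := by positivity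
        have hm23 : (2*t:ℝ) - 3 ≤ M t := by
          have : 2*t - 3 ≤ M t := by omega
          calc (2*t:ℝ) - 3 = ((2*t - 3 : ℕ) : ℝ) := by
                push_cast [Nat.cast_sub (by omega : 3 ≤ 2*t)]; ring
            _ ≤ M t := by exact_mod_cast this
        nlinarith
    · filter_upwards [eventually_ge_atTop 2] with t ht
      obtain ⟨h1, h2, h3, h4⟩ := fact t ht
      have ht0 : (0:ℝ) < t := by exact_mod_cast (by omega : 0 < t)
      rw [div_le_iff₀ ht0]
      rcases le_or_gt (M t) (2*t-4) with hcase | hcase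
      · have : (D t : ℝ) = 2*t - 4 - M t := by
          rw [hDt]
          push_cast [Nat.cast_sub hcase, Nat.cast_sub (by omega : 4 ≤ 2*t)]
          ring
        rw [this]
        nlinarith
      · have : D t = 0 := by rw [hDt]; omega
        rw [this]
        push_cast
        nlinarith
  -- (t-1)/t → 1
  have hA : Tendsto (fun t : ℕ => ((t:ℝ)-1)/t) atTop (nhds 1) := by
    have h0 : Tendsto (fun t : ℕ => 1 - 1/(t:ℝ)) atTop (nhds (1 - 0)) :=
      tendsto_const_nhds.sub hI
    rw [show (1:ℝ) = 1 - 0 by ring]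
    apply h0.congr'
    filter_upwards [eventually_ge_atTop 1] with t ht
    have ht0 : (0:ℝ) < t := by exact_mod_cast (by omega : 0 < t)
    field_simp
    ring
  constructor
  · -- C part
    have hR : Tendsto (fun t : ℕ =>
        (((t:ℝ)-1)/t)^2/4 - ((D t:ℝ)/t)*((D t:ℝ)/t + 1/(t:ℝ))/8) atTop
        (nhds (1^2/4 - (2-2*c)*((2-2*c) + 0)/8)) :=
      ((hA.pow 2).div_const 4).sub (((hD.mul (hD.add hI)).div_const 8))
    have hlim : (1:ℝ)^2/4 - (2-2*c)*((2-2*c) + 0)/8 = -c ^ 2 / 2 + c - 1 / 4 := by ring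
    rw [← hlim]
    apply hR.congr'
    filter_upwards [eventually_ge_atTop 2] with t ht
    obtain ⟨h1, h2, h3, h4⟩ := fact t ht
    have ht0 : (0:ℝ) < t := by exact_mod_cast (by omega : 0 < t)
    -- nat-level formula
    have hnat := C3_formula (t-1) (2*t) (M t) h4 (by omega)
    have key : 2*(C3 (t-1) (t-1) (2*t) (M t) : ℝ)
        = 2*((t:ℝ)-1)^2 - (D t:ℝ)*((D t:ℝ)+1) := by
      rcases le_or_gt (M t) (2*t-4) with hcase | hcase
      · rw [show 2*(t-1)-2-(M t) = D t from by rw [hDt]; omega,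
            show 2*(t-1)-1-(M t) = D t + 1 from by rw [hDt]; omega] at hnat
        have := congrArg (Nat.cast : ℕ → ℝ) hnat
        push_cast [Nat.cast_sub (by omega : 1 ≤ t)] at this
        ring_nf at this ⊢
        linarith
      · have hz : 2*(t-1)-2-(M t) = 0 := by omega
        have hz2 : D t = 0 := by rw [hDt]; omega
        rw [hz, zero_mul, add_zero] at hnat
        rw [hz2]
        have := congrArg (Nat.cast : ℕ → ℝ) hnat
        push_cast [Nat.cast_sub (by omega : 1 ≤ t)] at this
        ring_nf at this ⊢
        linarith
    have hC3 : (C3 (t-1) (t-1) (2*t) (M t) : ℝ)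
        = ((t:ℝ)-1)^2 - (D t:ℝ)*((D t:ℝ)+1)/2 := by linarith
    show _ = (C3 (t-1) (t-1) (2*t) (M t) : ℝ) / (2*(t:ℝ))^2
    rw [hC3]
    field_simp
    ring
  · -- S part
    have hR : Tendsto (fun t : ℕ =>
        (((t:ℝ)-1)/t)^2*((M t:ℝ)/t + 3*(1/(t:ℝ)) - 1)/8
          + ((D t:ℝ)/t)*((D t:ℝ)/t - 1/(t:ℝ))*((D t:ℝ)/t + 1/(t:ℝ))/48) atTop
        (nhds ((1:ℝ)^2*(2*c + 3*0 - 1)/8 + (2-2*c)*((2-2*c) - 0)*((2-2*c) + 0)/48)) :=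
      (((hA.pow 2).mul ((hM.add (hI.const_mul 3)).sub tendsto_const_nhds)).div_const 8).add
        ((((hD.mul (hD.sub hI)).mul (hD.add hI)).div_const 48))
    have hlim : (1:ℝ)^2*(2*c + 3*0 - 1)/8 + (2-2*c)*((2-2*c) - 0)*((2-2*c) + 0)/48
        = -c ^ 3 / 6 + c ^ 2 / 2 - c / 4 + 1 / 24 := by ring
    rw [← hlim]
    apply hR.congr'
    filter_upwards [eventually_ge_atTop 2] with t ht
    obtain ⟨h1, h2, h3, h4⟩ := fact t ht
    have ht0 : (0:ℝ) < t := by exact_mod_cast (by omega : 0 < t)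
    have hnat := S3_formula (t-1) (2*t) (M t) h4 (by omega)
    rw [show 2*(t-1)-2-(M t) = D t from by rw [hDt]; omega,
        show (M t)+2-(t-1) = (M t)+3-t from by omega] at hnat
    have key : 6*(S3 (t-1) (t-1) (2*t) (M t) : ℝ)
        = 6*((t:ℝ)-1)^2*((M t:ℝ)+3-(t:ℝ)) + (D t:ℝ)*((D t:ℝ)-1)*((D t:ℝ)+1) := by
      rcases Nat.eq_zero_or_pos (D t) with hcase | hcase
      · rw [hcase] at hnat ⊢
        simp only [Nat.zero_sub, zero_mul, Nat.cast_zero, add_zero] at hnat ⊢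
        have := congrArg (Nat.cast : ℕ → ℝ) hnat
        push_cast [Nat.cast_sub (by omega : 1 ≤ t), Nat.cast_sub (by omega : t ≤ M t + 3)] at this
        ring_nf at this ⊢
        linarith
      · obtain ⟨e, he⟩ : ∃ e, D t = e + 1 := ⟨D t - 1, by omega⟩
        rw [he] at hnat ⊢
        rw [show e+1-1 = e from by omega] at hnat
        have := congrArg (Nat.cast : ℕ → ℝ) hnat
        push_cast [Nat.cast_sub (by omega : 1 ≤ t), Nat.cast_sub (by omega : t ≤ M t + 3)] at this
        push_cast
        ring_nf at this ⊢
        linarith [this]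
    have hS3 : (S3 (t-1) (t-1) (2*t) (M t) : ℝ)
        = ((t:ℝ)-1)^2*((M t:ℝ)+3-(t:ℝ)) + (D t:ℝ)*((D t:ℝ)-1)*((D t:ℝ)+1)/6 := by
      linarith
    show _ = (S3 (t-1) (t-1) (2*t) (M t) : ℝ) / (2*(t:ℝ))^3
    rw [hS3]
    field_simp
    ring
end

section
/- Fix a real number c with 1/2 ≤ c ≤ 1, and for each even integer n ≥ 6 let m = ⌊c(n−1)⌋. Then, as n → ∞ through even integers, C_m(n/2−1, n, n)/n² → c/2 − 1/8 and S_m(n/2−1, n, n)/n³ → c²/4 − c/8 + 1/48. -/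
open Filter

section SliceAux
open Finset

lemma C3_eq (a b c m : ℕ) : C3 a b c m =
    ∑ x ∈ range a, ∑ y ∈ range b, ∑ z ∈ range c, if x + y + z = m then 1 else 0 := by
  rw [C3, Fintype.card_subtype, Finset.card_filter, Fintype.sum_prod_type]
  simp_rw [Fintype.sum_prod_type]
  simp only [← Fin.sum_univ_eq_sum_range]

lemma S3_eq (a b c m : ℕ) : S3 a b c m =
    ∑ x ∈ range a, ∑ y ∈ range b, ∑ z ∈ range c, if x + y + z ≤ m then 1 else 0 := by
  rw [S3, Fintype.card_subtype, Finset.card_filter, Fintype.sum_prod_type]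
  simp_rw [Fintype.sum_prod_type]
  simp only [← Fin.sum_univ_eq_sum_range]

-- inner count for equality
lemma zcount (n w m : ℕ) (h : m < n) :
    (∑ z ∈ range n, if w + z = m then (1:ℕ) else 0) = if w ≤ m then 1 else 0 := by
  by_cases hw : w ≤ m
  · have : ∀ z, (if w + z = m then (1:ℕ) else 0) = if z = m - w then 1 else 0 := by
      intro z; by_cases hz : w + z = m <;> by_cases hz' : z = m - w <;>
        simp [hz, hz'] <;> omega
    simp_rw [this]
    rw [Finset.sum_ite_eq' (range n) (m - w) (fun _ => (1:ℕ))]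
    simp [hw, Nat.lt_of_le_of_lt (Nat.sub_le m w) h]
  · simp only [if_neg hw]
    refine Finset.sum_eq_zero fun z _ => ?_
    rw [if_neg]; omega

-- inner count for inequality
lemma zcount_le (n w m : ℕ) (h : m < n) :
    (∑ z ∈ range n, if w + z ≤ m then (1:ℕ) else 0) =
      if w ≤ m then m - w + 1 else 0 := by
  by_cases hw : w ≤ m
  · rw [if_pos hw]
    have : ∀ z, (if w + z ≤ m then (1:ℕ) else 0) = if z ∈ range (m - w + 1) then 1 else 0 := by
      intro z; simp only [Finset.mem_range]
      by_cases hz : w + z ≤ m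
      · rw [if_pos hz, if_pos (by omega)]
      · rw [if_neg hz, if_neg (by omega)]
    simp_rw [this]
    rw [← Finset.sum_subset (Finset.range_subset_range.2 (by omega : m - w + 1 ≤ n))
      (fun z _ hz => by rw [if_neg hz])]
    rw [Finset.sum_ite_mem, Finset.inter_self, Finset.sum_const, Finset.card_range, smul_eq_mul, mul_one]
  · simp only [if_neg hw]
    refine Finset.sum_eq_zero fun z _ => ?_
    rw [if_neg]; omega

lemma gaussZ (M : ℤ) (a : ℕ) :
    2 * ∑ x ∈ range a, (M - x + 1) = a * (2*M+3) - a^2 := by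
  induction a with
  | zero => simp
  | succ n ih => rw [Finset.sum_range_succ]; push_cast; push_cast at ih; linarith

lemma cubicZ (M : ℤ) (a : ℕ) :
    3 * ∑ x ∈ range a, (M - x + 1) * (M - x + 2) =
      (M+1)*(M+2)*(M+3) - (M+1-a)*(M+2-a)*(M+3-a) := by
  induction a with
  | zero => simp
  | succ n ih => rw [Finset.sum_range_succ]; push_cast; push_cast at ih; linarith [ih]; 

lemma C3_nat (t m : ℕ) (h1 : t ≤ m + 1) (h2 : m < 2*t) :
    C3 (t-1) (2*t) (2*t) m = ∑ x ∈ range (t-1), (m - x + 1) := by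
  rw [C3_eq]
  refine Finset.sum_congr rfl fun x hx => ?_
  have hx' : x ≤ m := by have := Finset.mem_range.1 hx; omega
  simp_rw [zcount (2*t) _ m h2]
  rw [zcount_le (2*t) x m h2, if_pos hx']

lemma S3_nat (t m : ℕ) (h1 : t ≤ m + 1) (h2 : m < 2*t) :
    S3 (t-1) (2*t) (2*t) m =
      ∑ x ∈ range (t-1), ∑ y ∈ range (m - x + 1), ((m - x) - y + 1) := by
  rw [S3_eq]
  refine Finset.sum_congr rfl fun x hx => ?_
  have hx' : x ≤ m := by have := Finset.mem_range.1 hx; omega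
  have hsub : range (m - x + 1) ⊆ range (2*t) := Finset.range_subset_range.2 (by omega)
  have : ∀ y, (∑ z ∈ range (2*t), if x + y + z ≤ m then (1:ℕ) else 0)
      = if y ∈ range (m - x + 1) then (m - x) - y + 1 else 0 := by
    intro y
    rw [zcount_le (2*t) (x+y) m h2]
    by_cases hy : y ∈ range (m - x + 1)
    · have := Finset.mem_range.1 hy
      rw [if_pos (by omega), if_pos hy]; congr 1; omega
    · have hy2 : ¬ y < m - x + 1 := fun h => hy (Finset.mem_range.2 h)
      rw [if_neg (by omega), if_neg hy]
  simp_rw [this]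
  rw [← Finset.sum_subset hsub (fun z _ hz => by rw [if_neg hz])]
  exact Finset.sum_congr rfl fun y hy => by rw [if_pos hy]

lemma C3_int (t m : ℕ) (h1 : t ≤ m + 1) (h2 : m < 2*t) :
    2 * (C3 (t-1) (2*t) (2*t) m : ℤ) = ((t:ℤ)-1) * (2*m+3) - ((t:ℤ)-1)^2 := by
  have ht : 1 ≤ t := by omega
  rw [C3_nat t m h1 h2, Nat.cast_sum]
  have : ∀ x ∈ range (t-1), ((m - x + 1 : ℕ) : ℤ) = (m:ℤ) - x + 1 := by
    intro x hx
    have hx' : x ≤ m := by have := Finset.mem_range.1 hx; omega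
    push_cast [Nat.cast_sub hx']; ring
  rw [Finset.sum_congr rfl this, gaussZ]
  rw [Nat.cast_sub ht]; push_cast; ring

lemma S3_int (t m : ℕ) (h1 : t ≤ m + 1) (h2 : m < 2*t) :
    6 * (S3 (t-1) (2*t) (2*t) m : ℤ) =
      ((m:ℤ)+1)*((m:ℤ)+2)*((m:ℤ)+3)
        - ((m:ℤ)+2-t)*((m:ℤ)+3-t)*((m:ℤ)+4-t) := by
  have ht : 1 ≤ t := by omega
  rw [S3_nat t m h1 h2, Nat.cast_sum]
  have key : ∀ x ∈ range (t-1), 2 * ((∑ y ∈ range (m - x + 1), ((m - x) - y + 1) : ℕ) : ℤ)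
      = ((m:ℤ) - x + 1) * ((m:ℤ) - x + 2) := by
    intro x hx
    have hx' : x ≤ m := by have := Finset.mem_range.1 hx; omega
    have hk : ((m - x : ℕ) : ℤ) = (m:ℤ) - x := by push_cast [Nat.cast_sub hx']; ring
    rw [Nat.cast_sum]
    have : ∀ y ∈ range (m - x + 1), (((m - x) - y + 1 : ℕ) : ℤ) = ((m-x:ℕ):ℤ) - y + 1 := by
      intro y hy
      have hy' : y ≤ m - x := by have := Finset.mem_range.1 hy; omega
      push_cast [Nat.cast_sub hy']; ring
    rw [Finset.sum_congr rfl this, gaussZ ((m-x:ℕ):ℤ) (m-x+1)]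
    push_cast [hk]; ring
  have step : (6:ℤ) * ∑ x ∈ range (t-1), ((∑ y ∈ range (m - x + 1), ((m - x) - y + 1) : ℕ) : ℤ)
      = 3 * ∑ x ∈ range (t-1), ((m:ℤ) - x + 1) * ((m:ℤ) - x + 2) := by
    rw [← Finset.sum_congr rfl key, ← Finset.mul_sum]; ring
  rw [step, cubicZ, Nat.cast_sub ht]; push_cast; ring

lemma floor_div_tendsto (c : ℝ) (hc0 : 1 / 2 ≤ c) (hc1 : c ≤ 1) :
    Tendsto (fun t : ℕ => (⌊c * ((2 * t : ℝ) - 1)⌋₊ : ℝ) / t) atTop (nhds (2 * c)) := by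
  have hcpos : (0:ℝ) < c := by linarith
  have hg : Tendsto (fun t : ℕ => 2 * c - (c + 1) * (1 / (t:ℝ))) atTop (nhds (2 * c)) := by
    have := tendsto_one_div_atTop_nhds_zero_nat.const_mul (c + 1)
    simpa using tendsto_const_nhds.sub this
  have hh : Tendsto (fun t : ℕ => 2 * c - c * (1 / (t:ℝ))) atTop (nhds (2 * c)) := by
    have := tendsto_one_div_atTop_nhds_zero_nat.const_mul c
    simpa using tendsto_const_nhds.sub this
  refine tendsto_of_tendsto_of_tendsto_of_le_of_le' hg hh ?_ ?_
  · filter_upwards [eventually_atTop.2 ⟨1, fun t ht => ht⟩] with t ht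
    have htR : (0:ℝ) < t := by exact_mod_cast ht
    have hfl := Nat.sub_one_lt_floor (c * ((2 * t : ℝ) - 1))
    have : 2 * c - (c + 1) * (1 / (t:ℝ)) = (c * ((2 * t : ℝ) - 1) - 1) / t := by
      field_simp; ring
    rw [this, div_le_div_iff₀ htR htR]
    nlinarith [hfl]
  · filter_upwards [eventually_atTop.2 ⟨1, fun t ht => ht⟩] with t ht
    have htR : (0:ℝ) < t := by exact_mod_cast ht
    have ht1 : (1:ℝ) ≤ t := by exact_mod_cast ht
    have h2t : (0:ℝ) ≤ 2 * t - 1 := by linarith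
    have hfl : (⌊c * ((2 * t : ℝ) - 1)⌋₊ : ℝ) ≤ c * ((2 * t : ℝ) - 1) :=
      Nat.floor_le (by positivity)
    have : 2 * c - c * (1 / (t:ℝ)) = (c * ((2 * t : ℝ) - 1)) / t := by field_simp
    rw [this, div_le_div_iff₀ htR htR]
    nlinarith [hfl]


end SliceAux

/-- Fix a real `c` with `1/2 ≤ c ≤ 1` and, for each even `n = 2t`,
let `m = ⌊c(n-1)⌋`.  Then, as `n → ∞` through even integers,
`C_m(n/2-1, n, n)/n² → c/2 - 1/8` and `S_m(n/2-1, n, n)/n³ → c²/4 - c/8 + 1/48`. -/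
theorem slice_counts_half (c : ℝ) (hc0 : 1 / 2 ≤ c) (hc1 : c ≤ 1) :
    Tendsto
      (fun t : ℕ => (C3 (t - 1) (2 * t) (2 * t) ⌊c * ((2 * t : ℝ) - 1)⌋₊ : ℝ) /
        (2 * t : ℝ) ^ 2) atTop (nhds (c / 2 - 1 / 8)) ∧
    Tendsto
      (fun t : ℕ => (S3 (t - 1) (2 * t) (2 * t) ⌊c * ((2 * t : ℝ) - 1)⌋₊ : ℝ) /
        (2 * t : ℝ) ^ 3) atTop (nhds (c ^ 2 / 4 - c / 8 + 1 / 48)) := by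
  have hcpos : (0:ℝ) < c := by linarith
  set m : ℕ → ℕ := fun t => ⌊c * ((2 * t : ℝ) - 1)⌋₊ with hm
  have hu : Tendsto (fun t : ℕ => (m t : ℝ) / t) atTop (nhds (2 * c)) := floor_div_tendsto c hc0 hc1
  have he := tendsto_one_div_atTop_nhds_zero_nat (𝕜 := ℝ)
  -- hypotheses valid for t ≥ 1
  have hyps : ∀ t : ℕ, 1 ≤ t → t ≤ m t + 1 ∧ m t < 2 * t := by
    intro t ht
    have ht1 : (1:ℝ) ≤ t := by exact_mod_cast ht
    have hnn : (0:ℝ) ≤ c * ((2 * t : ℝ) - 1) := by nlinarith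
    constructor
    · have : ((t - 1 : ℕ) : ℝ) ≤ c * ((2 * t : ℝ) - 1) := by
        rw [Nat.cast_sub ht]; push_cast; nlinarith
      have h' : t - 1 ≤ m t := Nat.le_floor this
      omega
    · show ⌊c * ((2 * t : ℝ) - 1)⌋₊ < 2 * t
      exact (Nat.floor_lt hnn).2 (by push_cast; nlinarith)
  have hu' : Tendsto (fun t : ℕ => 2 * ((m t : ℝ) / t) + 3 * (1 / (t:ℝ))) atTop
      (nhds (2 * (2 * c) + 3 * 0)) := (hu.const_mul 2).add (he.const_mul 3)
  have h1e : Tendsto (fun t : ℕ => 1 - 1 / (t:ℝ)) atTop (nhds (1 - 0)) :=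
    tendsto_const_nhds.sub he
  constructor
  · have H : Tendsto (fun t : ℕ =>
        ((1 - 1/(t:ℝ)) * (2 * ((m t : ℝ) / t) + 3 * (1/(t:ℝ))) - (1 - 1/(t:ℝ))^2) / 8)
        atTop (nhds (((1-0) * (2*(2*c)+3*0) - (1-0)^2)/8)) :=
      ((h1e.mul hu').sub (h1e.pow 2)).div_const 8
    have hval : ((1-(0:ℝ)) * (2*(2*c)+3*0) - (1-0)^2)/8 = c / 2 - 1 / 8 := by ring
    rw [hval] at H
    refine H.congr' ?_
    filter_upwards [eventually_atTop.2 ⟨1, fun t ht => ht⟩] with t ht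
    obtain ⟨h1, h2⟩ := hyps t ht
    have htR : (0:ℝ) < t := by exact_mod_cast ht
    have hi := C3_int t (m t) h1 h2
    have hr : 2 * (C3 (t-1) (2*t) (2*t) (m t) : ℝ)
        = ((t:ℝ)-1) * (2*(m t : ℝ)+3) - ((t:ℝ)-1)^2 := by exact_mod_cast hi
    have hC : (C3 (t-1) (2*t) (2*t) (m t) : ℝ)
        = (((t:ℝ)-1) * (2*(m t : ℝ)+3) - ((t:ℝ)-1)^2) / 2 := by linarith
    show _ = (C3 (t-1) (2*t) (2*t) (m t) : ℝ) / (2 * (t:ℝ))^2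
    rw [hC]; field_simp; ring
  · have H : Tendsto (fun t : ℕ =>
        (((m t:ℝ)/t + 1/(t:ℝ)) * ((m t:ℝ)/t + 2*(1/(t:ℝ))) * ((m t:ℝ)/t + 3*(1/(t:ℝ)))
          - ((m t:ℝ)/t - 1 + 2*(1/(t:ℝ))) * ((m t:ℝ)/t - 1 + 3*(1/(t:ℝ)))
            * ((m t:ℝ)/t - 1 + 4*(1/(t:ℝ)))) / 48)
        atTop (nhds
          (((2*c + 0) * (2*c + 2*0) * (2*c + 3*0)
            - (2*c - 1 + 2*0) * (2*c - 1 + 3*0) * (2*c - 1 + 4*0)) / 48)) := by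
      exact ((((hu.add he).mul (hu.add (he.const_mul 2))).mul (hu.add (he.const_mul 3))).sub
        ((((hu.sub tendsto_const_nhds).add (he.const_mul 2)).mul
          ((hu.sub tendsto_const_nhds).add (he.const_mul 3))).mul
          ((hu.sub tendsto_const_nhds).add (he.const_mul 4)))).div_const 48
    have hval : ((2*c + 0) * (2*c + 2*0) * (2*c + 3*0)
            - (2*c - 1 + 2*0) * (2*c - 1 + 3*0) * (2*c - 1 + 4*0)) / 48
        = c ^ 2 / 4 - c / 8 + 1 / 48 := by ring
    rw [hval] at H
    refine H.congr' ?_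
    filter_upwards [eventually_atTop.2 ⟨1, fun t ht => ht⟩] with t ht
    obtain ⟨h1, h2⟩ := hyps t ht
    have htR : (0:ℝ) < t := by exact_mod_cast ht
    have hi := S3_int t (m t) h1 h2
    have hr : 6 * (S3 (t-1) (2*t) (2*t) (m t) : ℝ)
        = ((m t:ℝ)+1)*((m t:ℝ)+2)*((m t:ℝ)+3)
          - ((m t:ℝ)+2-(t:ℝ))*((m t:ℝ)+3-(t:ℝ))*((m t:ℝ)+4-(t:ℝ)) := by exact_mod_cast hi
    have hS : (S3 (t-1) (2*t) (2*t) (m t) : ℝ)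
        = (((m t:ℝ)+1)*((m t:ℝ)+2)*((m t:ℝ)+3)
          - ((m t:ℝ)+2-(t:ℝ))*((m t:ℝ)+3-(t:ℝ))*((m t:ℝ)+4-(t:ℝ))) / 6 := by linarith
    show _ = (S3 (t-1) (2*t) (2*t) (m t) : ℝ) / (2 * (t:ℝ))^3
    rw [hS]; field_simp; ring
end

section
/- Fix an integer d ≥ 1 and a real ε > 0. Then there is an N such that for every integer n ≥ N, the infinite-speed cop number of the d-fold Cartesian product G of copies of P_n satisfies c_∞(G) ≤ (1 + ε) · Σ_{k=0}^{⌊d/2⌋} (−1)^k · C(d,k) · C(⌊d(n+1)/2⌋ − kn − 1, d−1) (as real numbers), where C(·,·) denotes the binomial coefficient. -/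
open SimpleGraph

variable {V : Type*}

/-- The grid graph `P_{n 0} □ ⋯ □ P_{n (k-1)}`: vertices are tuples `(x₁, …, x_k)`
with `0 ≤ xᵢ ≤ nᵢ - 1`, two tuples being adjacent iff they differ by exactly `1`
in exactly one coordinate. -/
def gridGraph {k : ℕ} (n : Fin k → ℕ) : SimpleGraph (∀ i, Fin (n i)) :=
  SimpleGraph.fromRel (fun x y => ∃ i, (y i : ℕ) = (x i : ℕ) + 1 ∧ ∀ j, j ≠ i → x j = y j)




set_option maxHeartbeats 1000000

namespace GridProof

variable {d n : ℕ}

abbrev GV (d n : ℕ) := Fin d → Fin n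

open Finset
open Finset.Nat

def rank (x : GV d n) : ℕ := ∑ i, (x i : ℕ)

theorem rank_le (x : GV d n) : rank x ≤ d * (n - 1) := by
  calc rank x ≤ ∑ _i : Fin d, (n - 1) := by
        apply Finset.sum_le_sum
        intro i _
        exact Nat.le_sub_one_of_lt (x i).isLt
    _ = d * (n - 1) := by simp [Finset.sum_const, mul_comm]

theorem adj_mk {x y : GV d n} (i : Fin d) (h1 : (y i : ℕ) = (x i : ℕ) + 1)
    (h2 : ∀ j, j ≠ i → x j = y j) : (gridGraph (fun _ : Fin d => n)).Adj x y := by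
  refine ⟨?_, Or.inl ⟨i, h1, h2⟩⟩
  intro h
  rw [h] at h1
  omega

theorem adj_rank {x y : GV d n} (h : (gridGraph (fun _ : Fin d => n)).Adj x y) :
    rank y = rank x + 1 ∨ rank x = rank y + 1 := by
  have key : ∀ u v : GV d n, (∃ i, (v i : ℕ) = (u i : ℕ) + 1 ∧ ∀ j, j ≠ i → u j = v j) →
      rank v = rank u + 1 := by
    intro u v ⟨i, h1, h2⟩
    unfold rank
    rw [← Finset.sum_erase_add _ _ (Finset.mem_univ i), ← Finset.sum_erase_add _ _ (Finset.mem_univ i)]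
    have : ∑ j ∈ Finset.univ.erase i, (v j : ℕ) = ∑ j ∈ Finset.univ.erase i, (u j : ℕ) := by
      apply Finset.sum_congr rfl
      intro j hj
      rw [h2 j (Finset.mem_erase.1 hj).1]
    omega
  rcases h.2 with h' | h'
  · exact Or.inl (key _ _ h')
  · exact Or.inr (key _ _ h')


/-- Walk confinement: a walk avoiding level `t+1` starting above stays above. -/
theorem walk_stays_above {t : ℕ} {u u' : GV d n}
    (w : (gridGraph (fun _ : Fin d => n)).Walk u u')
    (havoid : ∀ v ∈ w.support, rank v ≠ t + 1) (hu : t + 2 ≤ rank u) :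
    t + 2 ≤ rank u' := by
  induction w with
  | nil => exact hu
  | @cons a b c hab w ih =>
    apply ih
    · intro v hv
      exact havoid v (by simp [Walk.support_cons, hv])
    · have hb : rank b ≠ t + 1 := havoid b (by simp [Walk.support_cons])
      rcases adj_rank hab with h | h <;> omega

theorem sweep_copsWin {K : ℕ} (f : ℕ → Fin K → GV d n)
    (hstep : ∀ t i, f (t+1) i = f t i ∨ (gridGraph (fun _ : Fin d => n)).Adj (f t i) (f (t+1) i))
    (hcover : ∀ v : GV d n, ∃ i, f (rank v) i = v) :
    CopsWin (gridGraph (fun _ : Fin d => n)) K := by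
  set G := gridGraph (fun _ : Fin d => n) with hG
  set R := d * (n - 1) with hR
  have key : ∀ s t, R + 1 - t ≤ s → ∀ r : GV d n, t ≤ rank r → CopsCatch G (f t) r := by
    intro s
    induction s with
    | zero =>
      intro t ht r hr
      exfalso
      have := rank_le r
      omega
    | succ s ih =>
      intro t ht r hr
      by_cases hcase : rank r = t
      · -- robber stands on the level fully covered by the cops: cops stay, robber stuck
        refine CopsCatch.step _ _ (f t) (fun i => Or.inl rfl) ?_
        intro r' ⟨w, hw⟩
        exfalso
        obtain ⟨i, hi⟩ := hcover r
        rw [hcase] at hi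
        exact hw r w.start_mem_support i hi
      · -- robber strictly above: cops advance the level
        have hr1 : t + 1 ≤ rank r := by omega
        refine CopsCatch.step _ _ (f (t+1)) (fun i => hstep t i) ?_
        intro r' ⟨w, hw⟩
        have havoid : ∀ v ∈ w.support, rank v ≠ t + 1 := by
          intro v hv hrv
          obtain ⟨i, hi⟩ := hcover v
          rw [hrv] at hi
          exact hw v hv i hi
        have hr2 : t + 2 ≤ rank r := by
          have := havoid r w.start_mem_support
          omega
        have hr' : t + 1 ≤ rank r' := by
          have := walk_stays_above w havoid hr2
          omega
        by_cases hts : R + 1 ≤ t + 1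
        · exfalso
          have := rank_le r'
          omega
        · exact ih (t+1) (by omega) r' hr'
  refine ⟨f 0, fun r₀ => key (R + 1) 0 (by omega) r₀ (Nat.zero_le _)⟩


theorem rank_snoc (u : GV d n) (y : Fin n) :
    rank (Fin.snoc u y : GV (d+1) n) = rank u + (y : ℕ) := by
  unfold rank
  rw [Fin.sum_univ_castSucc]
  simp

theorem snoc_inj {u u' : GV d n} {y y' : Fin n}
    (h : (Fin.snoc u y : GV (d+1) n) = Fin.snoc u' y') : u = u' ∧ y = y' := by
  constructor
  · have := congrArg Fin.init h
    rwa [Fin.init_snoc, Fin.init_snoc] at this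
  · have := congrFun h (Fin.last d)
    rwa [Fin.snoc_last, Fin.snoc_last] at this

theorem adj_snoc_base {u u' : GV d n} (y : Fin n)
    (h : (gridGraph (fun _ : Fin d => n)).Adj u u') :
    (gridGraph (fun _ : Fin (d+1) => n)).Adj (Fin.snoc u y) (Fin.snoc u' y) := by
  rw [gridGraph, fromRel_adj] at h ⊢
  obtain ⟨hne, h⟩ := h
  have lift : ∀ a b : GV d n, (∃ i, ((b i : ℕ) = (a i : ℕ) + 1 ∧ ∀ j, j ≠ i → a j = b j)) →
      ∃ i, (((Fin.snoc b y : GV (d+1) n) i : ℕ) = ((Fin.snoc a y : GV (d+1) n) i : ℕ) + 1 ∧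
        ∀ j, j ≠ i → (Fin.snoc a y : GV (d+1) n) j = (Fin.snoc b y : GV (d+1) n) j) := by
    rintro a b ⟨i, h1, h2⟩
    refine ⟨i.castSucc, by simpa using h1, ?_⟩
    intro j hj
    induction j using Fin.lastCases with
    | last => simp
    | cast j =>
      have : j ≠ i := fun hji => hj (by rw [hji])
      simpa using h2 j this
  constructor
  · intro hc
    exact hne (snoc_inj hc).1
  · rcases h with h | h
    · exact Or.inl (lift u u' h)
    · exact Or.inr (lift u' u h)

theorem adj_snoc_step (u : GV (d) n) {y y' : Fin n} (h : (y' : ℕ) = (y : ℕ) + 1) :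
    (gridGraph (fun _ : Fin (d+1) => n)).Adj (Fin.snoc u y) (Fin.snoc u y') := by
  refine adj_mk (Fin.last d) (by simpa using h) ?_
  intro j hj
  induction j using Fin.lastCases with
  | last => exact absurd rfl hj
  | cast j => simp

/-- A symmetric chain decomposition of the grid poset `{0,…,n-1}^d`. -/
structure SCD (d n : ℕ) where
  ι : Type
  fin : Fintype ι
  a : ι → ℕ
  g : ι → ℕ → GV d n
  ha : ∀ i, 2 * a i ≤ d * (n - 1)
  hrank : ∀ i t, a i ≤ t → t ≤ d * (n - 1) - a i → rank (g i t) = t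
  hstep : ∀ i t, a i ≤ t → t + 1 ≤ d * (n - 1) - a i →
    (gridGraph (fun _ : Fin d => n)).Adj (g i t) (g i (t + 1))
  hcover : ∀ v : GV d n, ∃ i, a i ≤ rank v ∧ rank v ≤ d * (n - 1) - a i ∧ g i (rank v) = v
  hdisj : ∀ i j t, a i ≤ t → t ≤ d * (n - 1) - a i → a j ≤ t → t ≤ d * (n - 1) - a j →
    g i t = g j t → i = j

def scdZero (n : ℕ) : SCD 0 n where
  ι := Unit
  fin := inferInstance
  a := fun _ => 0
  g := fun _ _ => Fin.elim0
  ha := fun _ => by simp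
  hrank := by
    intro i t h1 h2
    simp at h1 h2 ⊢
    subst h2
    simp [rank]
  hstep := by intro i t h1 h2; simp at h2
  hcover := by
    intro v
    refine ⟨(), by simp [rank], by simp [rank], ?_⟩
    funext j
    exact j.elim0
  hdisj := by intro i j _ _ _ _ _ _; rfl


variable (hn : 1 ≤ n) (S : SCD d n)

def chainG (c : S.ι) (iv t : ℕ) : GV (d+1) n :=
  if t - S.a c ≤ n - 1 then
    Fin.snoc (S.g c (S.a c + iv)) ⟨min (t - S.a c - iv) (n-1), by omega⟩
  else
    Fin.snoc (S.g c (S.a c + iv + (t - S.a c - (n-1)))) ⟨n - 1 - iv, by omega⟩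

theorem snoc_eq_mk {base u : GV d n} {yv : ℕ} {hy : yv < n} {y : Fin n}
    (h1 : base = u) (h2 : yv = (y : ℕ)) :
    (Fin.snoc base ⟨yv, hy⟩ : GV (d+1) n) = Fin.snoc u y := by
  subst h1
  have : (⟨yv, hy⟩ : Fin n) = y := Fin.ext h2
  rw [this]

theorem chainG_rank (c : S.ι) (iv t : ℕ) (hiv : iv ≤ min (d*(n-1) - 2*S.a c) (n-1))
    (h1 : S.a c + iv ≤ t) (h2 : t ≤ (d+1) * (n-1) - (S.a c + iv)) :
    rank (chainG hn S c iv t) = t := by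
  have ha := S.ha c
  have hRR : (d+1)*(n-1) = d*(n-1) + (n-1) := by ring
  unfold chainG
  by_cases hr : t - S.a c ≤ n - 1
  · rw [if_pos hr, rank_snoc, S.hrank c (S.a c + iv) (by omega) (by omega)]
    simp only
    omega
  · rw [if_neg hr, rank_snoc,
      S.hrank c (S.a c + iv + (t - S.a c - (n-1))) (by omega) (by omega)]
    simp only
    omega

theorem chainG_step (c : S.ι) (iv t : ℕ) (hiv : iv ≤ min (d*(n-1) - 2*S.a c) (n-1))
    (h1 : S.a c + iv ≤ t) (h2 : t + 1 ≤ (d+1) * (n-1) - (S.a c + iv)) :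
    (gridGraph (fun _ : Fin (d+1) => n)).Adj (chainG hn S c iv t) (chainG hn S c iv (t+1)) := by
  have ha := S.ha c
  have hRR : (d+1)*(n-1) = d*(n-1) + (n-1) := by ring
  unfold chainG
  by_cases hr : t + 1 - S.a c ≤ n - 1
  · rw [if_pos (by omega : t - S.a c ≤ n - 1), if_pos hr]
    exact adj_snoc_step _ (by simp only; omega)
  · by_cases hr2 : t - S.a c ≤ n - 1
    · rw [if_pos hr2, if_neg hr]
      have hb := S.hstep c (S.a c + iv) (by omega) (by omega)
      have e1 : S.a c + iv + (t + 1 - S.a c - (n-1)) = S.a c + iv + 1 := by omega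
      rw [e1]
      have e2 : (⟨min (t - S.a c - iv) (n-1), by omega⟩ : Fin n)
          = (⟨n - 1 - iv, by omega⟩ : Fin n) := Fin.ext (by simp only; omega)
      rw [e2]
      exact adj_snoc_base _ hb
    · rw [if_neg hr2, if_neg hr]
      have hb := S.hstep c (S.a c + iv + (t - S.a c - (n-1))) (by omega) (by omega)
      have e1 : S.a c + iv + (t + 1 - S.a c - (n-1))
          = S.a c + iv + (t - S.a c - (n-1)) + 1 := by omega
      rw [e1]
      exact adj_snoc_base _ hb

theorem chainG_cover (v : GV (d+1) n) :
    ∃ c iv, iv ≤ min (d*(n-1) - 2*S.a c) (n-1) ∧ S.a c + iv ≤ rank v ∧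
      rank v ≤ (d+1) * (n-1) - (S.a c + iv) ∧ chainG hn S c iv (rank v) = v := by
  obtain ⟨c, hc1, hc2, hc3⟩ := S.hcover (Fin.init v)
  have ha := S.ha c
  have hRR : (d+1)*(n-1) = d*(n-1) + (n-1) := by ring
  have hv : v = Fin.snoc (Fin.init v) (v (Fin.last d)) := (Fin.snoc_init_self v).symm
  set u := Fin.init v
  set y := v (Fin.last d)
  have hyq : (y : ℕ) ≤ n - 1 := by have := y.isLt; omega
  set s := rank u with hs
  have hrv : rank v = s + (y : ℕ) := by rw [hv, rank_snoc]
  set x := s - S.a c with hx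
  set iv := min x (n - 1 - (y : ℕ)) with hi
  refine ⟨c, iv, by omega, by omega, by omega, ?_⟩
  rw [hrv]
  unfold chainG
  by_cases hcase : x + (y : ℕ) ≤ n - 1
  · rw [if_pos (by omega : s + (y:ℕ) - S.a c ≤ n - 1)]
    rw [show S.a c + iv = s from by omega]
    exact hv ▸ snoc_eq_mk hc3 (by omega)
  · rw [if_neg (by omega : ¬ (s + (y:ℕ) - S.a c ≤ n - 1))]
    rw [show S.a c + iv + (s + (y:ℕ) - S.a c - (n-1)) = s from by omega]
    exact hv ▸ snoc_eq_mk hc3 (by omega)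

theorem chainG_inj (c c' : S.ι) (iv iv' t : ℕ)
    (hiv : iv ≤ min (d*(n-1) - 2*S.a c) (n-1)) (hiv' : iv' ≤ min (d*(n-1) - 2*S.a c') (n-1))
    (h1 : S.a c + iv ≤ t) (h2 : t ≤ (d+1) * (n-1) - (S.a c + iv))
    (h3 : S.a c' + iv' ≤ t) (h4 : t ≤ (d+1) * (n-1) - (S.a c' + iv'))
    (heq : chainG hn S c iv t = chainG hn S c' iv' t) : c = c' ∧ iv = iv' := by
  have ha := S.ha c
  have ha' := S.ha c'
  have hRR : (d+1)*(n-1) = d*(n-1) + (n-1) := by ring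
  unfold chainG at heq
  by_cases hr : t - S.a c ≤ n - 1 <;> by_cases hr' : t - S.a c' ≤ n - 1
  · rw [if_pos hr, if_pos hr'] at heq
    obtain ⟨hb, hyy⟩ := snoc_inj heq
    have hyy' := congrArg Fin.val hyy
    simp only at hyy'
    have hrk : S.a c + iv = S.a c' + iv' := by
      have := congrArg rank hb
      rwa [S.hrank c _ (by omega) (by omega), S.hrank c' _ (by omega) (by omega)] at this
    have hcc : c = c' := S.hdisj c c' (S.a c + iv) (by omega) (by omega) (by omega)
      (by omega) (by rw [hb, hrk])
    subst hcc
    exact ⟨rfl, by omega⟩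
  · rw [if_pos hr, if_neg hr'] at heq
    obtain ⟨hb, hyy⟩ := snoc_inj heq
    have hrk : S.a c + iv = S.a c' + iv' + (t - S.a c' - (n-1)) := by
      have := congrArg rank hb
      rwa [S.hrank c _ (by omega) (by omega), S.hrank c' _ (by omega) (by omega)] at this
    have hcc : c = c' := S.hdisj c c' (S.a c + iv) (by omega) (by omega) (by omega)
      (by omega) (by rw [hb, hrk])
    subst hcc
    omega
  · rw [if_neg hr, if_pos hr'] at heq
    obtain ⟨hb, hyy⟩ := snoc_inj heq
    have hrk : S.a c + iv + (t - S.a c - (n-1)) = S.a c' + iv' := by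
      have := congrArg rank hb
      rwa [S.hrank c _ (by omega) (by omega), S.hrank c' _ (by omega) (by omega)] at this
    have hcc : c = c' := S.hdisj c c' (S.a c' + iv') (by omega) (by omega) (by omega)
      (by omega) ((congrArg (S.g c) hrk).symm.trans hb)
    subst hcc
    omega
  · rw [if_neg hr, if_neg hr'] at heq
    obtain ⟨hb, hyy⟩ := snoc_inj heq
    have hyy' := congrArg Fin.val hyy
    simp only at hyy'
    have hrk : S.a c + iv + (t - S.a c - (n-1)) = S.a c' + iv' + (t - S.a c' - (n-1)) := by
      have := congrArg rank hb
      rwa [S.hrank c _ (by omega) (by omega), S.hrank c' _ (by omega) (by omega)] at this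
    have hcc : c = c' := S.hdisj c c' (S.a c + iv + (t - S.a c - (n-1))) (by omega) (by omega)
      (by omega) (by omega) (by rw [hb, hrk])
    subst hcc
    exact ⟨rfl, by omega⟩

def scdSucc : SCD (d+1) n := by
  letI := S.fin
  exact
  { ι := Σ c : S.ι, Fin (min (d * (n-1) - 2 * S.a c) (n-1) + 1)
    fin := inferInstance
    a := fun p => S.a p.1 + p.2.val
    g := fun p t => chainG hn S p.1 p.2.val t
    ha := by
      rintro ⟨c, i⟩
      have h1 := S.ha c
      have h2 := i.isLt
      have : (d+1)*(n-1) = d*(n-1) + (n-1) := by ring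
      simp only
      omega
    hrank := by
      rintro ⟨c, i⟩ t h1 h2
      exact chainG_rank hn S c i.val t (by have := i.isLt; omega) h1 h2
    hstep := by
      rintro ⟨c, i⟩ t h1 h2
      exact chainG_step hn S c i.val t (by have := i.isLt; omega) h1 h2
    hcover := by
      intro v
      obtain ⟨c, iv, hiv, hh1, hh2, hh3⟩ := chainG_cover hn S v
      exact ⟨⟨c, ⟨iv, by omega⟩⟩, hh1, hh2, hh3⟩
    hdisj := by
      rintro ⟨c, i⟩ ⟨c', i'⟩ t h1 h2 h3 h4 heq
      obtain ⟨hcc, hii⟩ := chainG_inj hn S c c' i.val i'.val t (by have := i.isLt; omega)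
        (by have := i'.isLt; omega) h1 h2 h3 h4 heq
      subst hcc
      have : i = i' := Fin.ext hii
      rw [this] }

def scdAll (d : ℕ) {n : ℕ} (hn : 1 ≤ n) : SCD d n :=
  Nat.rec (scdZero n) (fun _ S => scdSucc hn S) d

theorem copsWin_card (hn : 1 ≤ n) (S : SCD d n) :
    CopsWin (gridGraph (fun _ : Fin d => n)) (@Fintype.card S.ι S.fin) := by
  letI := S.fin
  set R := d * (n - 1) with hR
  let e : Fin (Fintype.card S.ι) ≃ S.ι := (Fintype.equivFin S.ι).symm
  apply sweep_copsWin (f := fun t j => S.g (e j) (max (S.a (e j)) (min t (R - S.a (e j)))))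
  · intro t j
    set c := e j
    have ha := S.ha c
    set A := S.a c with hA
    set c₁ := max A (min t (R - A)) with hc₁
    set c₂ := max A (min (t+1) (R - A)) with hc₂
    by_cases hcc : c₂ = c₁
    · left; rw [hcc]
    · right
      have h1 : c₂ = c₁ + 1 := by omega
      have h2 : A ≤ c₁ := by omega
      have h3 : c₁ + 1 ≤ R - A := by omega
      rw [h1]
      exact S.hstep c c₁ h2 h3
  · intro v
    obtain ⟨i, h1, h2, h3⟩ := S.hcover v
    refine ⟨e.symm i, ?_⟩
    have he : e (e.symm i) = i := e.apply_symm_apply i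
    rw [he]
    rw [show max (S.a i) (min (rank v) (R - S.a i)) = rank v from by omega]
    exact h3

theorem card_le_middle (hn : 1 ≤ n) (S : SCD d n) :
    @Fintype.card S.ι S.fin ≤
      (Finset.univ.filter (fun v : GV d n => rank v = d * (n-1) / 2)).card := by
  letI := S.fin
  set R := d * (n - 1) with hR
  set m := R / 2 with hm
  rw [← Finset.card_univ (α := S.ι)]
  apply Finset.card_le_card_of_injOn (fun i : S.ι => S.g i m)
  · intro i _
    have := S.ha i
    simp only [Finset.mem_coe, Finset.mem_filter, Finset.mem_univ, true_and]
    exact S.hrank i m (by omega) (by omega)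
  · intro i _ j _ hij
    have hai := S.ha i
    have haj := S.ha j
    exact S.hdisj i j m (by omega) (by omega) (by omega) (by omega) hij

theorem infCopNumber_le_middle (d : ℕ) {n : ℕ} (hn : 1 ≤ n) :
    infCopNumber (gridGraph (fun _ : Fin d => n)) ≤
      (Finset.univ.filter (fun v : GV d n => rank v = d * (n-1) / 2)).card := by
  have h1 := copsWin_card hn (scdAll d hn)
  have h2 := card_le_middle hn (scdAll d hn)
  exact le_trans (Nat.sInf_le h1) h2


theorem card_aT_zero_head (k m : ℕ) :
    ((antidiagonalTuple (k+1) m).filter (fun x => x 0 = 0)).card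
      = (antidiagonalTuple k m).card := by
  refine Finset.card_bij' (fun x _ => Fin.tail x) (fun y _ => Fin.cons 0 y) ?hi ?hj ?li ?ri
  case hi =>
    intro x hx
    simp only [mem_filter, mem_antidiagonalTuple] at hx
    obtain ⟨hs, h0⟩ := hx
    rw [mem_antidiagonalTuple]
    rw [Fin.sum_univ_succ] at hs
    simp only [Fin.tail]
    omega
  case hj =>
    intro y hy
    rw [mem_antidiagonalTuple] at hy
    simp only [mem_filter, mem_antidiagonalTuple, Fin.sum_univ_succ, Fin.cons_zero,
      Fin.cons_succ, zero_add, and_true]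
    exact hy
  case li =>
    intro x hx
    simp only [mem_filter] at hx
    show Fin.cons 0 (Fin.tail x) = x
    rw [← hx.2]
    exact Fin.cons_self_tail x
  case ri =>
    intro y _
    simp [Fin.tail_cons]

theorem card_aT_pos_head (k m : ℕ) :
    ((antidiagonalTuple (k+1) (m+1)).filter (fun x => ¬ x 0 = 0)).card
      = (antidiagonalTuple (k+1) m).card := by
  refine Finset.card_bij' (fun x _ => Fin.cons (x 0 - 1) (Fin.tail x))
    (fun y _ => Fin.cons (y 0 + 1) (Fin.tail y)) ?hi ?hj ?li ?ri
  case hi =>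
    intro x hx
    simp only [mem_filter, mem_antidiagonalTuple] at hx
    obtain ⟨hs, h0⟩ := hx
    rw [mem_antidiagonalTuple]
    rw [Fin.sum_univ_succ] at hs ⊢
    simp only [Fin.cons_zero, Fin.cons_succ, Fin.tail]
    omega
  case hj =>
    intro y hy
    rw [mem_antidiagonalTuple] at hy
    rw [Fin.sum_univ_succ] at hy
    simp only [mem_filter, mem_antidiagonalTuple, Fin.sum_univ_succ, Fin.cons_zero,
      Fin.cons_succ, Fin.tail]
    omega
  case li =>
    intro x hx
    simp only [mem_filter] at hx
    have h0 : x 0 ≠ 0 := hx.2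
    show Fin.cons (Fin.cons (x 0 - 1) (Fin.tail x) 0 + 1) (Fin.tail (Fin.cons (x 0 - 1) (Fin.tail x))) = x
    simp only [Fin.tail_cons, Fin.cons_zero]
    rw [show x 0 - 1 + 1 = x 0 from by omega]
    exact Fin.cons_self_tail x
  case ri =>
    intro y _
    show Fin.cons (Fin.cons (y 0 + 1) (Fin.tail y) 0 - 1) (Fin.tail (Fin.cons (y 0 + 1) (Fin.tail y))) = y
    simp only [Fin.tail_cons, Fin.cons_zero, Nat.add_sub_cancel]
    exact Fin.cons_self_tail y

theorem card_aT (k m : ℕ) : (antidiagonalTuple k m).card = Nat.multichoose k m := by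
  induction k generalizing m with
  | zero =>
    cases m with
    | zero => simp
    | succ m => simp [Nat.multichoose_zero_succ]
  | succ k ih =>
    induction m with
    | zero =>
      rw [antidiagonalTuple_zero_right, Nat.multichoose_zero_right]
      simp
    | succ m ihm =>
      rw [Nat.multichoose_succ_succ, ← ih (m+1), ← ihm]
      rw [← Finset.card_filter_add_card_filter_not (p := fun x => x 0 = 0)]
      rw [card_aT_zero_head, card_aT_pos_head]

theorem card_aT_choose {k : ℕ} (m : ℕ) (hk : 1 ≤ k) :
    (antidiagonalTuple k m).card = (m + k - 1).choose (k - 1) := by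
  rw [card_aT, Nat.multichoose_eq]
  rw [show k + m - 1 = m + k - 1 from by omega]
  rw [← Nat.choose_symm (by omega : m ≤ m + k - 1)]
  congr 1
  omega


section IE
variable (d n m : ℕ)

/-- intersection counts -/
theorem inter_count (t : Finset (Fin d)) :
    ((t.inf fun i => Finset.univ.filter
        (fun x : {x : Fin d → ℕ // x ∈ antidiagonalTuple d m} => n ≤ x.1 i)).card)
      = if t.card * n ≤ m then (antidiagonalTuple d (m - t.card * n)).card else 0 := by
  classical
  have hmem : ∀ x : {x : Fin d → ℕ // x ∈ antidiagonalTuple d m},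
      (x ∈ t.inf fun i => Finset.univ.filter
        (fun x : {x : Fin d → ℕ // x ∈ antidiagonalTuple d m} => n ≤ x.1 i)) ↔
      ∀ i ∈ t, n ≤ x.1 i := by
    intro x
    rw [Finset.mem_inf]
    apply forall_congr'
    intro i
    simp
  have hsumc : ∑ i : Fin d, (if i ∈ t then n else 0) = t.card * n := by
    rw [Finset.sum_ite_mem, Finset.univ_inter, Finset.sum_const, smul_eq_mul]
  split_ifs with hle
  · refine Finset.card_bij'
      (fun x _ => fun i => x.1 i - (if i ∈ t then n else 0))
      (fun y hy => ⟨fun i => y i + (if i ∈ t then n else 0), ?_⟩) ?hi ?hj ?li ?ri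
    case hi =>
      intro x hx
      rw [hmem] at hx
      have hxs : ∑ i, x.1 i = m := mem_antidiagonalTuple.1 x.2
      rw [mem_antidiagonalTuple]
      rw [Finset.sum_tsub_distrib _ (fun i _ => by
        by_cases hit : i ∈ t
        · simpa [hit] using hx i hit
        · simp [hit])]
      rw [hxs, hsumc]
    case hj =>
      intro y hy
      rw [hmem]
      intro i hi
      simp [hi]
    case li =>
      intro x hx
      rw [hmem] at hx
      apply Subtype.ext
      funext i
      simp only
      by_cases hit : i ∈ t
      · have := hx i hit
        simp only [hit, if_pos]
        omega
      · simp [hit]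
    case ri =>
      intro y hy
      funext i
      simp only
      omega
    -- the membership proof for the inverse map
    · rw [mem_antidiagonalTuple]
      have hys : ∑ i, y i = m - t.card * n := mem_antidiagonalTuple.1 hy
      rw [Finset.sum_add_distrib, hys, hsumc]
      omega
  · rw [Finset.card_eq_zero, Finset.eq_empty_iff_forall_notMem]
    intro x hx
    rw [hmem] at hx
    have hxs : ∑ i, x.1 i = m := mem_antidiagonalTuple.1 x.2
    have : t.card * n ≤ ∑ i, x.1 i := by
      calc t.card * n = ∑ _i ∈ t, n := by rw [Finset.sum_const, smul_eq_mul]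
        _ ≤ ∑ i ∈ t, x.1 i := Finset.sum_le_sum (fun i hi => hx i hi)
        _ ≤ ∑ i, x.1 i := Finset.sum_le_sum_of_subset (Finset.subset_univ t)
    omega

/-- the grid middle layer corresponds to bounded tuples -/
theorem grid_layer_eq_inf_compl :
    ((Finset.univ.filter (fun v : GV d n => rank v = m)).card)
      = ((Finset.univ.inf fun i : Fin d => (Finset.univ.filter
        (fun x : {x : Fin d → ℕ // x ∈ antidiagonalTuple d m} => n ≤ x.1 i))ᶜ).card) := by
  classical
  have hmem : ∀ x : {x : Fin d → ℕ // x ∈ antidiagonalTuple d m},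
      (x ∈ Finset.univ.inf fun i : Fin d => (Finset.univ.filter
        (fun x : {x : Fin d → ℕ // x ∈ antidiagonalTuple d m} => n ≤ x.1 i))ᶜ) ↔
      ∀ i, x.1 i < n := by
    intro x
    rw [Finset.mem_inf]
    constructor
    · intro h i
      have := h i (Finset.mem_univ i)
      simp only [Finset.mem_compl, Finset.mem_filter, Finset.mem_univ, true_and, not_le] at this
      exact this
    · intro h i _
      simp only [Finset.mem_compl, Finset.mem_filter, Finset.mem_univ, true_and, not_le]
      exact h i
  refine Finset.card_bij'
    (fun v hv => ⟨fun i => (v i : ℕ), ?_⟩)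
    (fun x hx => fun i => ⟨x.1 i, ?_⟩) ?hi ?hj ?li ?ri
  · rw [mem_antidiagonalTuple]
    simp only [Finset.mem_filter, Finset.mem_univ, true_and] at hv
    exact hv
  · rw [hmem] at hx
    exact hx i
  case hi =>
    intro v hv
    rw [hmem]
    intro i
    exact (v i).isLt
  case hj =>
    intro x hx
    simp only [Finset.mem_filter, Finset.mem_univ, true_and]
    unfold rank
    simp only
    exact mem_antidiagonalTuple.1 x.2
  case li =>
    intro v hv
    funext i
    apply Fin.ext
    simp
  case ri =>
    intro x hx
    apply Subtype.ext
    funext i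
    simp

end IE

theorem middle_layer_int (d n m : ℕ) (hd : 1 ≤ d) :
    (((Finset.univ.filter (fun v : GV d n => rank v = m)).card : ℤ))
      = ∑ k ∈ Finset.range (d+1), (-1:ℤ)^k * (d.choose k) *
          (if k * n ≤ m then (((m - k*n) + d - 1).choose (d-1) : ℤ) else 0) := by
  classical
  rw [grid_layer_eq_inf_compl d n m]
  rw [Finset.inclusion_exclusion_card_inf_compl Finset.univ
    (fun i : Fin d => Finset.univ.filter
      (fun x : {x : Fin d → ℕ // x ∈ antidiagonalTuple d m} => n ≤ x.1 i))]
  rw [Finset.sum_powerset]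
  rw [show #(Finset.univ : Finset (Fin d)) = d from by simp]
  apply Finset.sum_congr rfl
  intro j hj
  have hstep : ∀ t ∈ Finset.powersetCard j (Finset.univ : Finset (Fin d)),
      (-1:ℤ) ^ #t * (#(t.inf fun i => Finset.univ.filter
        (fun x : {x : Fin d → ℕ // x ∈ antidiagonalTuple d m} => n ≤ x.1 i)) : ℤ)
      = (-1:ℤ)^j * (if j * n ≤ m then (((m - j*n) + d - 1).choose (d-1) : ℤ) else 0) := by
    intro t ht
    have hcard : #t = j := (Finset.mem_powersetCard.1 ht).2
    rw [inter_count d n m t, hcard]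
    split_ifs with h
    · rw [card_aT_choose _ hd]
    · simp
  rw [Finset.sum_congr rfl hstep, Finset.sum_const, Finset.card_powersetCard,
    show #(Finset.univ : Finset (Fin d)) = d from by simp]
  rw [nsmul_eq_mul]
  ring

theorem middle_layer_real (d n : ℕ) (hd : 1 ≤ d) (hn : 1 ≤ n) :
    (((Finset.univ.filter (fun v : GV d n => rank v = d*(n-1)/2)).card : ℝ))
      = ∑ k ∈ Finset.range (d/2 + 1), (-1:ℝ)^k * (d.choose k : ℝ) *
          ((d * (n + 1) / 2 - k * n - 1).choose (d-1) : ℝ) := by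
  set m := d*(n-1)/2 with hm
  have hdn : d*(n+1) = d*(n-1) + 2*d := by
    rw [show n + 1 = (n-1) + 2 from by omega]; ring
  have hm2 : d*(n+1)/2 = m + d := by
    rw [hdn, hm, Nat.add_mul_div_left _ _ (by norm_num : 0 < 2)]
  have h2m : 2*m ≤ d*(n-1) := by
    rw [hm]; omega
  have hdd : d*(n-1) + d = d*n := by
    obtain ⟨n', rfl⟩ : ∃ n', n = n' + 1 := ⟨n-1, by omega⟩
    simp [Nat.add_sub_cancel]; ring
  have hint := middle_layer_int d n m hd
  have htrunc : ∑ k ∈ Finset.range (d+1), (-1:ℤ)^k * (d.choose k) *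
          (if k * n ≤ m then (((m - k*n) + d - 1).choose (d-1) : ℤ) else 0)
      = ∑ k ∈ Finset.range (d/2+1), (-1:ℤ)^k * (d.choose k) *
          (((d * (n + 1) / 2 - k * n - 1).choose (d-1) : ℤ)) := by
    rw [← Finset.sum_subset (Finset.range_subset_range.2 (by omega : d/2+1 ≤ d+1))]
    · apply Finset.sum_congr rfl
      intro k hk
      rw [Finset.mem_range] at hk
      have hkd : k ≤ d/2 := by omega
      have hkn : k * n ≤ m ∨ (k * n > m ∧ 2 ≤ d ∧ 1 ≤ k) := by
        by_cases h : k * n ≤ m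
        · exact Or.inl h
        · right
          refine ⟨by omega, ?_, ?_⟩
          · by_contra hd2
            have hd1 : d = 1 := by omega
            subst hd1
            have hk0 : k = 0 := by omega
            subst hk0
            omega
          · by_contra hk1
            have hk0 : k = 0 := by omega
            subst hk0
            omega
      rcases hkn with h | ⟨h1, h2, h3⟩
      · have harg : m - k*n + d - 1 = d*(n+1)/2 - k*n - 1 := by rw [hm2]; omega
        rw [if_pos h, harg]
      · rw [if_neg (by omega)]
        rw [hm2]
        rw [Nat.choose_eq_zero_of_lt (by omega : m + d - k*n - 1 < d - 1)]
        simp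
    · intro k hk hnk
      rw [Finset.mem_range] at hk hnk
      have hk2 : d/2 + 1 ≤ k := by omega
      have h2k : d + 1 ≤ 2 * k := by omega
      have hmul : (d+1) * n ≤ (2*k) * n := Nat.mul_le_mul_right n h2k
      have : m < k * n := by nlinarith
      rw [if_neg (by omega)]
      simp
  rw [htrunc] at hint
  have := congrArg (fun z : ℤ => (z : ℝ)) hint
  push_cast at this
  exact this

end GridProof

/-- Fix an integer `d ≥ 1` and a real `ε > 0`.  For all sufficiently
large `n`, the infinite-speed cop number of the `d`-fold Cartesian product `G` of
copies of `P_n` (the `d`-dimensional grid) satisfies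
`c_∞(G) ≤ (1 + ε) · Σ_{k=0}^{⌊d/2⌋} (-1)^k C(d,k) C(⌊d(n+1)/2⌋ - kn - 1, d-1)`. -/
theorem infCopNumber_gridD_upper (d : ℕ) (hd : 1 ≤ d) (ε : ℝ) (hε : 0 < ε) :
    ∃ N : ℕ, ∀ n : ℕ, N ≤ n →
      (infCopNumber (gridGraph (fun _ : Fin d => n)) : ℝ) ≤
        (1 + ε) * ∑ k ∈ Finset.range (d / 2 + 1),
          (-1 : ℝ) ^ k * (d.choose k : ℝ) *
            ((d * (n + 1) / 2 - k * n - 1).choose (d - 1) : ℝ) := by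
  refine ⟨1, fun n hn => ?_⟩
  have hd1 : 1 ≤ d := hd
  have h1 := GridProof.infCopNumber_le_middle d (n := n) hn
  have h2 := GridProof.middle_layer_real d n hd hn
  have h0 : (0:ℝ) ≤ ∑ k ∈ Finset.range (d / 2 + 1),
      (-1 : ℝ) ^ k * (d.choose k : ℝ) *
        ((d * (n + 1) / 2 - k * n - 1).choose (d - 1) : ℝ) := by
    rw [← h2]
    positivity
  calc (infCopNumber (gridGraph (fun _ : Fin d => n)) : ℝ)
      ≤ ((Finset.univ.filter (fun v : GridProof.GV d n =>
          GridProof.rank v = d * (n-1) / 2)).card : ℝ) := Nat.cast_le.2 h1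
    _ = ∑ k ∈ Finset.range (d / 2 + 1),
          (-1 : ℝ) ^ k * (d.choose k : ℝ) *
            ((d * (n + 1) / 2 - k * n - 1).choose (d - 1) : ℝ) := h2
    _ ≤ (1 + ε) * ∑ k ∈ Finset.range (d / 2 + 1),
          (-1 : ℝ) ^ k * (d.choose k : ℝ) *
            ((d * (n + 1) / 2 - k * n - 1).choose (d - 1) : ℝ) := by nlinarith
end

section
/- There is an N such that the following holds for every even integer n ≥ N. Let c = 2^{n−3}/(n·ln n) and let S be any set of vertices of the hypercube Q_n with |S| ≤ c. Then there is a connected component K of the graph obtained from Q_n by deleting S such that the total number of vertices of Q_n lying outside both S and K is less than (1/2)·C(n, n/2), where C(n, n/2) is the central binomial coefficient. -/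
set_option maxHeartbeats 800000

open SimpleGraph

/-- The `n`-dimensional hypercube `Q_n`: vertices are binary strings of length `n`,
two strings being adjacent iff they differ in exactly one coordinate. -/
def hypercube (n : ℕ) : SimpleGraph (Fin n → Bool) where
  Adj x y := ∃ i, x i ≠ y i ∧ ∀ j, j ≠ i → x j = y j
  symm := by
    constructor
    rintro x y ⟨i, h1, h2⟩
    exact ⟨i, h1.symm, fun j hj => (h2 j hj).symm⟩
  loopless := by
    constructor
    rintro x ⟨i, h, -⟩
    exact h rfl

namespace HSC

open Finset

def flip {n : ℕ} (x : Fin n → Bool) (i : Fin n) : Fin n → Bool := Function.update x i (!(x i))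

def hcount {n : ℕ} (A : Finset (Fin n → Bool)) (x : Fin n → Bool) : ℕ :=
  (Finset.univ.filter (fun i => flip x i ∉ A)).card

lemma sqrt_lemma {l m u : ℝ} (hl : 0 ≤ l) (hm : 0 ≤ m) (hlm : l^2 + m^2 ≤ 1) (hu : 0 ≤ u) :
    l * Real.sqrt u + m ≤ Real.sqrt (u + 1) := by
  have h1 : (l * Real.sqrt u + m)^2 ≤ u + 1 := by
    nlinarith [Real.sq_sqrt hu, Real.sqrt_nonneg u, sq_nonneg (m * Real.sqrt u - l)]
  calc l * Real.sqrt u + m = Real.sqrt ((l * Real.sqrt u + m)^2) := by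
        rw [Real.sqrt_sq (by positivity)]
    _ ≤ Real.sqrt (u + 1) := Real.sqrt_le_sqrt h1

lemma flip_flip {n : ℕ} (x : Fin n → Bool) (i : Fin n) : flip (flip x i) i = x := by
  funext j
  by_cases h : j = i
  · subst h; simp [flip]
  · simp [flip, Function.update_of_ne h]

lemma card_cube (n : ℕ) : Fintype.card (Fin n → Bool) = 2 ^ n := by
  simp [Fintype.card_fun]


-- sum splitting over last coordinate
lemma sum_snoc {n : ℕ} [DecidableEq (Fin (n+1) → Bool)] (A : Finset (Fin (n+1) → Bool)) (b : Bool)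
    (F : (Fin (n+1) → Bool) → ℝ) :
    ∑ x ∈ A.filter (fun x => x (Fin.last n) = b), F x
      = ∑ y ∈ univ.filter (fun y : Fin n → Bool => Fin.snoc y b ∈ A), F (Fin.snoc y b) := by
  classical
  apply Finset.sum_nbij' (i := fun x => Fin.init x) (j := fun y => Fin.snoc y b)
  · intro x hx
    obtain ⟨hxA, hxb⟩ := mem_filter.mp hx
    simp only [mem_filter, mem_univ, true_and]
    rwa [← hxb, Fin.snoc_init_self]
  · intro y hy
    simp only [mem_filter, mem_univ, true_and] at hy
    exact mem_filter.mpr ⟨hy, by simp⟩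
  · intro x hx
    obtain ⟨hxA, hxb⟩ := mem_filter.mp hx
    rw [← hxb, Fin.snoc_init_self]
  · intro y hy
    simp [Fin.init_snoc]
  · intro x hx
    obtain ⟨hxA, hxb⟩ := mem_filter.mp hx
    rw [← hxb, Fin.snoc_init_self]

lemma sum_split {n : ℕ} [DecidableEq (Fin (n+1) → Bool)] (A : Finset (Fin (n+1) → Bool))
    (F : (Fin (n+1) → Bool) → ℝ) :
    ∑ x ∈ A, F x
      = ∑ y ∈ univ.filter (fun y : Fin n → Bool => Fin.snoc y false ∈ A), F (Fin.snoc y false)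
      + ∑ y ∈ univ.filter (fun y : Fin n → Bool => Fin.snoc y true ∈ A), F (Fin.snoc y true) := by
  classical
  rw [← sum_snoc A false F, ← sum_snoc A true F]
  rw [← Finset.sum_filter_add_sum_filter_not A (fun x => x (Fin.last n) = false) F]
  congr 1
  apply Finset.sum_congr _ (fun _ _ => rfl)
  apply Finset.filter_congr
  intro x _
  simp [Bool.not_eq_false]

-- hcount decomposition
lemma hcount_snoc {n : ℕ} [DecidableEq (Fin (n+1) → Bool)] (A : Finset (Fin (n+1) → Bool))
    (b : Bool) (y : Fin n → Bool) :
    hcount A (Fin.snoc y b)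
      = hcount (univ.filter (fun z : Fin n → Bool => Fin.snoc z b ∈ A)) y
        + (if Fin.snoc y (!b) ∈ A then 0 else 1) := by
  classical
  have key : ∀ j : Fin n, flip (Fin.snoc y b) (Fin.castSucc j) = Fin.snoc (flip y j) b := by
    intro j
    simp only [flip, Fin.snoc_castSucc]
    rw [Fin.snoc_update]
  have keyl : flip (Fin.snoc y b) (Fin.last n) = Fin.snoc y (!b) := by
    simp only [flip, Fin.snoc_last]
    rw [Fin.update_snoc_last]
  unfold hcount
  rw [Finset.card_filter, Finset.card_filter, Fin.sum_univ_castSucc]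
  congr 1
  · apply Finset.sum_congr rfl
    intro j _
    rw [key j]
    simp only [mem_filter, mem_univ, true_and]
    congr 1
  · rw [keyl]
    by_cases h : Fin.snoc y (!b) ∈ A <;> simp [h]


theorem talagrand : ∀ (n : ℕ) (A : Finset (Fin n → Bool)),
    Real.sqrt 2 * A.card * (2^n - A.card) / 2^n ≤ ∑ x ∈ A, Real.sqrt (hcount A x) := by
  intro n
  induction n with
  | zero =>
    intro A
    have hle : A.card ≤ 1 := by
      have h := Finset.card_le_univ A
      have h2 : Fintype.card (Fin 0 → Bool) = 1 := by simpa using card_cube 0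
      omega
    have h0 : Real.sqrt 2 * A.card * (2^0 - A.card) / 2^0 ≤ 0 := by
      interval_cases h : A.card <;> norm_num
    exact h0.trans (Finset.sum_nonneg fun x _ => Real.sqrt_nonneg _)
  | succ n ih =>
    intro A
    classical
    set A0 : Finset (Fin n → Bool) := univ.filter (fun y => Fin.snoc y false ∈ A) with hA0def
    set A1 : Finset (Fin n → Bool) := univ.filter (fun y => Fin.snoc y true ∈ A) with hA1def
    set N : ℝ := 2^n with hNdef
    have hN0 : (0:ℝ) < N := by rw [hNdef]; positivity
    set a0 : ℝ := (A0.card : ℝ) with ha0def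
    set a1 : ℝ := (A1.card : ℝ) with ha1def
    have ha0nn : 0 ≤ a0 := by rw [ha0def]; positivity
    have ha1nn : 0 ≤ a1 := by rw [ha1def]; positivity
    clear_value N a0 a1
    have hcard_le : ∀ B : Finset (Fin n → Bool), (B.card : ℝ) ≤ N := by
      intro B
      have h := Finset.card_le_univ B
      have h2 : (Finset.univ : Finset (Fin n → Bool)).card = 2^n := by
        simpa using card_cube n
      rw [hNdef]
      calc (B.card : ℝ) ≤ ((Finset.univ : Finset (Fin n → Bool)).card : ℝ) := by exact_mod_cast h
        _ = 2^n := by rw [h2]; push_cast; ring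
    have ha0le : a0 ≤ N := by rw [ha0def]; exact hcard_le A0
    have ha1le : a1 ≤ N := by rw [ha1def]; exact hcard_le A1
    have hcardA : (A.card : ℝ) = a0 + a1 := by
      have h := sum_split A (fun _ => (1:ℝ))
      simp only [Finset.sum_const, nsmul_eq_mul, mul_one] at h
      rw [ha0def, ha1def, hA0def, hA1def]
      exact h
    have hpow : (2:ℝ)^(n+1) = 2*N := by rw [hNdef]; ring
    -- sqrt 2 facts
    have hs2 : Real.sqrt 2 ^ 2 = 2 := Real.sq_sqrt (by norm_num)
    have hs2nn : 0 ≤ Real.sqrt 2 := Real.sqrt_nonneg 2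
    set X : ℝ := Real.sqrt 2 * (a0*(N-a0) + a1*(N-a1)) / N with hXdef
    set Y : ℝ := |a0 - a1| with hYdef
    have hE0 : 0 ≤ a0*(N-a0) := mul_nonneg ha0nn (by linarith)
    have hE1 : 0 ≤ a1*(N-a1) := mul_nonneg ha1nn (by linarith)
    have hXnn : 0 ≤ X := by
      rw [hXdef]
      exact div_nonneg (mul_nonneg hs2nn (by linarith)) hN0.le
    have hYnn : 0 ≤ Y := abs_nonneg _
    clear_value X Y
    have hsum_nonneg : (0:ℝ) ≤ ∑ x ∈ A, Real.sqrt (hcount A x) :=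
      Finset.sum_nonneg fun x _ => Real.sqrt_nonneg _
    by_cases hdeg : X^2 + Y^2 = 0
    · -- degenerate case
      have hX0 : X = 0 := by
        have h2 : X^2 = 0 := by linarith [sq_nonneg X, sq_nonneg Y]
        exact (pow_eq_zero_iff two_ne_zero).mp h2
      have hY0 : Y = 0 := by
        have h2 : Y^2 = 0 := by linarith [sq_nonneg X, sq_nonneg Y]
        exact (pow_eq_zero_iff two_ne_zero).mp h2
      have heq : a0 = a1 := by
        have := abs_eq_zero.mp (hYdef ▸ hY0)
        linarith
      have hE : a0*(N-a0) + a1*(N-a1) = 0 := by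
        rw [hXdef] at hX0
        have h2 : (0:ℝ) < Real.sqrt 2 := Real.sqrt_pos.mpr (by norm_num)
        rcases div_eq_zero_iff.mp hX0 with h | h
        · rcases mul_eq_zero.mp h with h' | h'
          · exact absurd h' (ne_of_gt h2)
          · exact h'
        · exact absurd h (ne_of_gt hN0)
      have hE00 : a0*(N-a0) = 0 := by linarith
      have hcases : a0 = 0 ∨ a0 = N := by
        rcases mul_eq_zero.mp hE00 with h | h
        · exact Or.inl h
        · exact Or.inr (by linarith)
      have hLHS : Real.sqrt 2 * A.card * (2^(n+1) - A.card) / 2^(n+1) = 0 := by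
        rw [hcardA, hpow, ← heq]
        rcases hcases with h | h <;> rw [h] <;> ring
      rw [hLHS]; exact hsum_nonneg
    · -- main case
      set R : ℝ := Real.sqrt (X^2 + Y^2) with hRdef
      have hXYnn : 0 ≤ X^2 + Y^2 := add_nonneg (sq_nonneg X) (sq_nonneg Y)
      have hRpos : 0 < R := Real.sqrt_pos.mpr (lt_of_le_of_ne hXYnn (Ne.symm hdeg))
      have hR2 : R^2 = X^2 + Y^2 := Real.sq_sqrt hXYnn
      clear_value R
      set l : ℝ := X / R with hldef
      set m : ℝ := Y / R with hmdef
      have hlnn : 0 ≤ l := div_nonneg hXnn hRpos.le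
      have hmnn : 0 ≤ m := div_nonneg hYnn hRpos.le
      clear_value l m
      have hlm1 : l^2 + m^2 = 1 := by
        have h1 : l^2 + m^2 = (X^2 + Y^2)/R^2 := by rw [hldef, hmdef]; ring
        rw [h1, ← hR2, div_self (pow_ne_zero 2 hRpos.ne')]
      have hl1 : l ≤ 1 := by linarith [sq_nonneg (l-1), sq_nonneg m]
      -- key per-branch inequality
      have key : ∀ b : Bool,
          l * (∑ y ∈ univ.filter (fun y : Fin n → Bool => Fin.snoc y b ∈ A),
                Real.sqrt (hcount (univ.filter (fun z : Fin n → Bool => Fin.snoc z b ∈ A)) y))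
            + m * (((univ.filter (fun y : Fin n → Bool => Fin.snoc y b ∈ A)) \
                    (univ.filter (fun y : Fin n → Bool => Fin.snoc y (!b) ∈ A))).card)
          ≤ ∑ y ∈ univ.filter (fun y : Fin n → Bool => Fin.snoc y b ∈ A),
              Real.sqrt (hcount A (Fin.snoc y b)) := by
        intro b
        set Ab := univ.filter (fun y : Fin n → Bool => Fin.snoc y b ∈ A) with hAbdef
        set Ab' := univ.filter (fun y : Fin n → Bool => Fin.snoc y (!b) ∈ A) with hAb'def
        have hsd : ((Ab \ Ab').card : ℝ) = ∑ y ∈ Ab, (if y ∈ Ab' then (0:ℝ) else 1) := by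
          rw [Finset.sdiff_eq_filter]
          rw [Finset.sum_ite, Finset.sum_const, Finset.sum_const]
          simp [Finset.filter_not]
        rw [hsd, Finset.mul_sum, Finset.mul_sum, ← Finset.sum_add_distrib]
        apply Finset.sum_le_sum
        intro y hy
        have hmem : (Fin.snoc y (!b) ∈ A) ↔ y ∈ Ab' := by
          rw [hAb'def]; simp
        rw [hcount_snoc A b y]
        by_cases hc : Fin.snoc y (!b) ∈ A
        · rw [if_pos hc, if_pos (hmem.mp hc)]
          simp only [Nat.add_zero, mul_zero, add_zero]
          exact mul_le_of_le_one_left (Real.sqrt_nonneg _) hl1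
        · rw [if_neg hc, if_neg (fun h => hc (hmem.mpr h))]
          push_cast
          have := sqrt_lemma hlnn hmnn (le_of_eq hlm1)
            (Nat.cast_nonneg (hcount Ab y) : (0:ℝ) ≤ (hcount Ab y : ℝ))
          simpa using this
      -- IH
      have hIH0 := ih A0
      have hIH1 := ih A1
      have hX_le : X ≤ (∑ y ∈ A0, Real.sqrt (hcount A0 y)) + (∑ y ∈ A1, Real.sqrt (hcount A1 y)) := by
        have : X = Real.sqrt 2 * a0 * (N - a0) / N + Real.sqrt 2 * a1 * (N - a1) / N := by
          rw [hXdef]; ring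
        rw [this]
        exact add_le_add (by rw [ha0def]; exact hIH0) (by rw [ha1def]; exact hIH1)
      have hY_le : Y ≤ ((A0 \ A1).card : ℝ) + ((A1 \ A0).card : ℝ) := by
        have h01 : a0 ≤ ((A0 \ A1).card : ℝ) + a1 := by
          have := Finset.card_le_card_sdiff_add_card (s := A0) (t := A1)
          rw [ha0def, ha1def]; exact_mod_cast this
        have h10 : a1 ≤ ((A1 \ A0).card : ℝ) + a0 := by
          have := Finset.card_le_card_sdiff_add_card (s := A1) (t := A0)
          rw [ha0def, ha1def]; exact_mod_cast this
        have d0 : (0:ℝ) ≤ ((A0 \ A1).card : ℝ) := Nat.cast_nonneg _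
        have d1 : (0:ℝ) ≤ ((A1 \ A0).card : ℝ) := Nat.cast_nonneg _
        rw [hYdef, abs_sub_le_iff]
        constructor <;> linarith
      -- the algebraic step
      have halg : Real.sqrt 2 * (a0+a1) * (2*N - (a0+a1)) / (2*N) ≤ R := by
        have hGnn : 0 ≤ Real.sqrt 2 * (a0+a1) * (2*N - (a0+a1)) / (2*N) :=
          div_nonneg (mul_nonneg (mul_nonneg hs2nn (by linarith)) (by linarith)) (by linarith)
        rw [hRdef]
        rw [Real.le_sqrt hGnn hXYnn]
        have hG2 : (Real.sqrt 2 * (a0+a1) * (2*N - (a0+a1)) / (2*N))^2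
            = 2 * ((a0+a1) * (2*N - (a0+a1)))^2 / (4*N^2) := by
          rw [div_pow, show (Real.sqrt 2 * (a0+a1) * (2*N - (a0+a1)))^2
            = Real.sqrt 2^2 * ((a0+a1) * (2*N - (a0+a1)))^2 from by ring, hs2]
          congr 1
          ring
        have hX2 : X^2 = 2 * (a0*(N-a0) + a1*(N-a1))^2 / N^2 := by
          rw [hXdef, div_pow, show (Real.sqrt 2 * (a0*(N-a0) + a1*(N-a1)))^2
            = Real.sqrt 2^2 * (a0*(N-a0) + a1*(N-a1))^2 from by ring, hs2]
        have hY2 : Y^2 = (a0 - a1)^2 := by rw [hYdef, sq_abs]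
        have hN2 : (0:ℝ) < 4*N^2 := by positivity
        rw [hG2, hX2, hY2, div_le_iff₀ hN2]
        have hexp : (2 * (a0*(N-a0) + a1*(N-a1))^2 / N^2 + (a0-a1)^2) * (4*N^2)
            = 8 * (a0*(N-a0) + a1*(N-a1))^2 + 4*N^2*(a0-a1)^2 := by
          field_simp
          ring
        rw [hexp]
        have hiden : 8 * (a0*(N-a0) + a1*(N-a1))^2 + 4*N^2*(a0-a1)^2
            - 2 * ((a0+a1) * (2*N - (a0+a1)))^2
            = 4*((a0-a1)*(N-a0-a1))^2 + 2*((a0-a1)^2)^2 := by ring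
        linarith [sq_nonneg ((a0-a1)*(N-a0-a1)), sq_nonneg ((a0-a1)^2), hiden]
      -- chain
      have hRle : R ≤ ∑ x ∈ A, Real.sqrt (hcount A x) := by
        have hlXmY : l * X + m * Y = R := by
          have h1 : l * X + m * Y = (X^2 + Y^2)/R := by rw [hldef, hmdef]; ring
          rw [h1, ← hR2, sq, mul_div_assoc, div_self hRpos.ne', mul_one]
        calc R = l * X + m * Y := hlXmY.symm
          _ ≤ l * ((∑ y ∈ A0, Real.sqrt (hcount A0 y)) + (∑ y ∈ A1, Real.sqrt (hcount A1 y)))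
              + m * (((A0 \ A1).card : ℝ) + ((A1 \ A0).card : ℝ)) :=
            add_le_add (mul_le_mul_of_nonneg_left hX_le hlnn) (mul_le_mul_of_nonneg_left hY_le hmnn)
          _ = (l * (∑ y ∈ A0, Real.sqrt (hcount A0 y)) + m * ((A0 \ A1).card : ℝ))
              + (l * (∑ y ∈ A1, Real.sqrt (hcount A1 y)) + m * ((A1 \ A0).card : ℝ)) := by ring
          _ ≤ (∑ y ∈ A0, Real.sqrt (hcount A (Fin.snoc y false)))
              + (∑ y ∈ A1, Real.sqrt (hcount A (Fin.snoc y true))) := by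
            have k0 := key false
            have k1 := key true
            simp only [Bool.not_false, Bool.not_true] at k0 k1
            rw [hA0def, hA1def]
            exact add_le_add k0 k1
          _ = ∑ x ∈ A, Real.sqrt (hcount A x) := (sum_split A (fun x => Real.sqrt (hcount A x))).symm
      calc Real.sqrt 2 * A.card * (2^(n+1) - A.card) / 2^(n+1)
          = Real.sqrt 2 * (a0+a1) * (2*N - (a0+a1)) / (2*N) := by rw [hcardA, hpow]
        _ ≤ R := halg
        _ ≤ _ := hRle


lemma le_of_sq_le_sq {a b : ℝ} (h : a^2 ≤ b^2) (hb : 0 ≤ b) : a ≤ b :=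
  calc a ≤ |a| := le_abs_self a
    _ = Real.sqrt (a^2) := (Real.sqrt_sq_eq_abs a).symm
    _ ≤ Real.sqrt (b^2) := Real.sqrt_le_sqrt h
    _ = b := by rw [Real.sqrt_sq hb]

theorem boundary_lower {n : ℕ} (hn : 1 ≤ n) (A : Finset (Fin n → Bool))
    [DecidablePred (fun x : Fin n → Bool => ∃ i, flip x i ∉ A)] :
    Real.sqrt 2 * A.card * (2^n - A.card) / ((2:ℝ)^n * Real.sqrt n)
      ≤ ((A.filter (fun x => ∃ i, flip x i ∉ A)).card : ℝ) := by
  classical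
  have hsn : (0:ℝ) < Real.sqrt n := Real.sqrt_pos.mpr (by exact_mod_cast Nat.lt_of_lt_of_le Nat.zero_lt_one hn)
  have hb : ∑ x ∈ A, Real.sqrt (hcount A x)
      ≤ ((A.filter (fun x => ∃ i, flip x i ∉ A)).card : ℝ) * Real.sqrt n := by
    rw [← Finset.sum_filter_add_sum_filter_not A (fun x => ∃ i, flip x i ∉ A)
      (fun x => Real.sqrt (hcount A x))]
    have h1 : ∑ x ∈ A.filter (fun x => ∃ i, flip x i ∉ A), Real.sqrt (hcount A x)
        ≤ ∑ _x ∈ A.filter (fun x => ∃ i, flip x i ∉ A), Real.sqrt n := by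
      apply Finset.sum_le_sum
      intro x _
      apply Real.sqrt_le_sqrt
      have : hcount A x ≤ n := by
        have h := Finset.card_le_univ (Finset.univ.filter (fun i => flip x i ∉ A))
        rw [Fintype.card_fin] at h
        exact h
      exact_mod_cast this
    have h2 : ∑ x ∈ A.filter (fun x => ¬ ∃ i, flip x i ∉ A), Real.sqrt (hcount A x) = 0 := by
      apply Finset.sum_eq_zero
      intro x hx
      have hx2 := (Finset.mem_filter.mp hx).2
      push_neg at hx2
      have : hcount A x = 0 := by
        unfold hcount
        rw [Finset.card_eq_zero, Finset.filter_eq_empty_iff]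
        intro i _
        exact not_not.mpr (hx2 i)
      rw [this]
      simp
    rw [h2, add_zero]
    calc _ ≤ _ := h1
      _ = ((A.filter (fun x => ∃ i, flip x i ∉ A)).card : ℝ) * Real.sqrt n := by
        rw [Finset.sum_const, nsmul_eq_mul]
  have ht := talagrand n A
  have hcomb := le_trans ht hb
  rw [div_le_iff₀ (by positivity : (0:ℝ) < 2^n)] at hcomb
  rw [div_le_iff₀ (by positivity : (0:ℝ) < (2:ℝ)^n * Real.sqrt n)]
  calc Real.sqrt 2 * ↑A.card * (2 ^ n - ↑A.card)
      ≤ ↑(A.filter (fun x => ∃ i, flip x i ∉ A)).card * Real.sqrt n * 2^n := hcomb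
    _ = ↑(A.filter (fun x => ∃ i, flip x i ∉ A)).card * (2^n * Real.sqrt n) := by ring

lemma cb_sq_lower : ∀ k : ℕ, 1 ≤ k → (16:ℝ)^k ≤ ((Nat.centralBinom k : ℝ))^2 * (4*(k:ℝ)) := by
  intro k hk
  induction k, hk using Nat.le_induction with
  | base =>
    have hc1 : Nat.centralBinom 1 = 2 := by decide
    rw [hc1]; norm_num
  | succ k hk ih =>
    have hrec : ((k:ℝ)+1) * (Nat.centralBinom (k+1) : ℝ)
        = 2*(2*(k:ℝ)+1)*(Nat.centralBinom k : ℝ) := by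
      have := Nat.succ_mul_centralBinom_succ k
      have h2 := congrArg (fun x : ℕ => (x:ℝ)) this
      push_cast at h2
      linarith
    set c : ℝ := (Nat.centralBinom k : ℝ) with hc
    set c1 : ℝ := (Nat.centralBinom (k+1) : ℝ) with hc1
    have h2 : ((k:ℝ)+1)^2 * c1^2 = 4*(2*(k:ℝ)+1)^2*c^2 := by
      linear_combination (((k:ℝ)+1)*c1 + 2*(2*(k:ℝ)+1)*c) * hrec
    have hkpos : (0:ℝ) < k := by exact_mod_cast hk
    have e1 : c1^2 * (4*((k:ℝ)+1)) * (((k:ℝ)+1)^2 * (k:ℝ))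
        = (c^2*(4*(k:ℝ))) * (4*((k:ℝ)+1)*(2*(k:ℝ)+1)^2) := by
      linear_combination (4*((k:ℝ)+1)*(k:ℝ)) * h2
    have e2 : (16:ℝ)^(k+1) * (((k:ℝ)+1)^2*(k:ℝ))
        ≤ (c^2*(4*(k:ℝ))) * (4*((k:ℝ)+1)*(2*(k:ℝ)+1)^2) := by
      have hgap : 16 * (((k:ℝ)+1)^2*(k:ℝ)) ≤ 4*((k:ℝ)+1)*(2*(k:ℝ)+1)^2 := by
        have hiden : 4*((k:ℝ)+1)*(2*(k:ℝ)+1)^2 - 16 * (((k:ℝ)+1)^2*(k:ℝ)) = 4*((k:ℝ)+1) := by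
          ring
        linarith
      have hp : (0:ℝ) < (16:ℝ)^k := by positivity
      have h16 : (16:ℝ)^(k+1) = 16^k*16 := pow_succ 16 k
      have t1 : (16:ℝ)^(k+1) * (((k:ℝ)+1)^2*(k:ℝ))
          ≤ (16:ℝ)^k * (4*((k:ℝ)+1)*(2*(k:ℝ)+1)^2) := by
        calc (16:ℝ)^(k+1) * (((k:ℝ)+1)^2*(k:ℝ))
            = 16^k * (16*(((k:ℝ)+1)^2*(k:ℝ))) := by rw [h16]; ring
          _ ≤ 16^k * (4*((k:ℝ)+1)*(2*(k:ℝ)+1)^2) := mul_le_mul_of_nonneg_left hgap hp.le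
      have t2 : (16:ℝ)^k * (4*((k:ℝ)+1)*(2*(k:ℝ)+1)^2)
          ≤ (c^2*(4*(k:ℝ))) * (4*((k:ℝ)+1)*(2*(k:ℝ)+1)^2) :=
        mul_le_mul_of_nonneg_right ih (by positivity)
      linarith
    have hpos : (0:ℝ) < ((k:ℝ)+1)^2*(k:ℝ) := by positivity
    have e3 : (16:ℝ)^(k+1) * (((k:ℝ)+1)^2*(k:ℝ))
        ≤ c1^2 * (4*((k:ℝ)+1)) * (((k:ℝ)+1)^2 * (k:ℝ)) := by rw [e1]; exact e2
    have := le_of_mul_le_mul_right e3 hpos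
    push_cast
    linarith

lemma cb_sq_upper : ∀ k : ℕ, ((Nat.centralBinom k : ℝ))^2 * (3*(k:ℝ)+1) ≤ (16:ℝ)^k := by
  intro k
  induction k with
  | zero => simp [Nat.centralBinom]
  | succ k ih =>
    have hrec : ((k:ℝ)+1) * (Nat.centralBinom (k+1) : ℝ)
        = 2*(2*(k:ℝ)+1)*(Nat.centralBinom k : ℝ) := by
      have := Nat.succ_mul_centralBinom_succ k
      have h2 := congrArg (fun x : ℕ => (x:ℝ)) this
      push_cast at h2
      linarith
    set c : ℝ := (Nat.centralBinom k : ℝ) with hc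
    set c1 : ℝ := (Nat.centralBinom (k+1) : ℝ) with hc1
    have h2 : ((k:ℝ)+1)^2 * c1^2 = 4*(2*(k:ℝ)+1)^2*c^2 := by
      linear_combination (((k:ℝ)+1)*c1 + 2*(2*(k:ℝ)+1)*c) * hrec
    have hknn : (0:ℝ) ≤ k := Nat.cast_nonneg k
    have e1 : c1^2 * (3*((k:ℝ)+1)+1) * (((k:ℝ)+1)^2 * (3*(k:ℝ)+1))
        = (c^2*(3*(k:ℝ)+1)) * (4*(2*(k:ℝ)+1)^2*(3*((k:ℝ)+1)+1)) := by
      linear_combination ((3*((k:ℝ)+1)+1)*(3*(k:ℝ)+1)) * h2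
    have e2 : (c^2*(3*(k:ℝ)+1)) * (4*(2*(k:ℝ)+1)^2*(3*((k:ℝ)+1)+1))
        ≤ (16:ℝ)^(k+1) * (((k:ℝ)+1)^2 * (3*(k:ℝ)+1)) := by
      have t2 : (c^2*(3*(k:ℝ)+1)) * (4*(2*(k:ℝ)+1)^2*(3*((k:ℝ)+1)+1))
          ≤ (16:ℝ)^k * (4*(2*(k:ℝ)+1)^2*(3*((k:ℝ)+1)+1)) :=
        mul_le_mul_of_nonneg_right ih (by positivity)
      have hgap : 4*(2*(k:ℝ)+1)^2*(3*((k:ℝ)+1)+1) ≤ 16 * (((k:ℝ)+1)^2 * (3*(k:ℝ)+1)) := by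
        have hiden : 16 * (((k:ℝ)+1)^2 * (3*(k:ℝ)+1)) - 4*(2*(k:ℝ)+1)^2*(3*((k:ℝ)+1)+1)
            = 4*(k:ℝ) := by ring
        linarith
      have hp : (0:ℝ) < (16:ℝ)^k := by positivity
      have h16 : (16:ℝ)^(k+1) = 16^k*16 := pow_succ 16 k
      have t1 : (16:ℝ)^k * (4*(2*(k:ℝ)+1)^2*(3*((k:ℝ)+1)+1))
          ≤ (16:ℝ)^(k+1) * (((k:ℝ)+1)^2 * (3*(k:ℝ)+1)) := by
        calc (16:ℝ)^k * (4*(2*(k:ℝ)+1)^2*(3*((k:ℝ)+1)+1))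
            ≤ 16^k * (16*(((k:ℝ)+1)^2 * (3*(k:ℝ)+1))) := mul_le_mul_of_nonneg_left hgap hp.le
          _ = (16:ℝ)^(k+1) * (((k:ℝ)+1)^2 * (3*(k:ℝ)+1)) := by rw [h16]; ring
      linarith
    have hpos : (0:ℝ) < ((k:ℝ)+1)^2 * (3*(k:ℝ)+1) := by positivity
    have e3 : c1^2 * (3*((k:ℝ)+1)+1) * (((k:ℝ)+1)^2 * (3*(k:ℝ)+1))
        ≤ (16:ℝ)^(k+1) * (((k:ℝ)+1)^2 * (3*(k:ℝ)+1)) := by rw [e1]; exact e2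
    have := le_of_mul_le_mul_right e3 hpos
    push_cast
    linarith

lemma greedy {ι : Type*} [DecidableEq ι] (s : Finset ι) (f : ι → ℕ) (r : ℝ) (hr : 0 < r)
    (hsmall : ∀ i ∈ s, (f i : ℝ) < r) (htot : r ≤ ∑ i ∈ s, (f i : ℝ)) :
    ∃ t, t ⊆ s ∧ r ≤ ∑ i ∈ t, (f i : ℝ) ∧ ∑ i ∈ t, (f i : ℝ) < 2*r := by
  classical
  revert hsmall htot
  induction s using Finset.induction_on with
  | empty =>
    intro _ htot
    exfalso
    simp only [Finset.sum_empty] at htot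
    linarith
  | @insert a s ha ih =>
    intro hsmall htot
    by_cases hcase : r ≤ ∑ i ∈ s, (f i : ℝ)
    · obtain ⟨t, hts, h1, h2⟩ := ih (fun i hi => hsmall i (Finset.mem_insert_of_mem hi)) hcase
      exact ⟨t, hts.trans (Finset.subset_insert a s), h1, h2⟩
    · push_neg at hcase
      refine ⟨insert a s, Finset.Subset.refl _, htot, ?_⟩
      rw [Finset.sum_insert ha]
      have := hsmall a (Finset.mem_insert_self a s)
      linarith


lemma closed_bound {n : ℕ} (hn : 1 ≤ n) (S X : Finset (Fin n → Bool))
    (hcl : ∀ x ∈ X, ∀ i : Fin n, flip x i ∉ S → flip x i ∈ X)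
    (m : ℝ) (hm0 : 0 ≤ m) (hm1 : m ≤ X.card) (hm2 : m ≤ 2^n - X.card) :
    Real.sqrt 2 * m / (2 * Real.sqrt n) ≤ S.card := by
  classical
  set A : Finset (Fin n → Bool) := univ \ X with hAdef
  have hXle : X.card ≤ 2^n := by
    have h := Finset.card_le_univ X
    rwa [card_cube] at h
  have hAcard : (A.card : ℝ) = 2^n - X.card := by
    rw [hAdef, Finset.card_sdiff_of_subset (Finset.subset_univ X), Finset.card_univ, card_cube,
      Nat.cast_sub hXle]
    push_cast
    ring
  have hbd := boundary_lower hn A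
  have hsub : A.filter (fun x => ∃ i, flip x i ∉ A) ⊆ S := by
    intro x hx
    obtain ⟨hxA, i, hflip⟩ := Finset.mem_filter.mp hx
    have hxX : x ∉ X := (Finset.mem_sdiff.mp hxA).2
    have hfX : flip x i ∈ X := by
      by_contra hc
      exact hflip (Finset.mem_sdiff.mpr ⟨Finset.mem_univ _, hc⟩)
    by_contra hxS
    have h2 := hcl (flip x i) hfX i (by rwa [flip_flip])
    rw [flip_flip] at h2
    exact hxX h2
  have hScard : ((A.filter (fun x => ∃ i, flip x i ∉ A)).card : ℝ) ≤ S.card := by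
    exact_mod_cast Finset.card_le_card hsub
  have hchain := le_trans hbd hScard
  have hXc : (2:ℝ)^n - (A.card:ℝ) = X.card := by rw [hAcard]; ring
  rw [hXc] at hchain
  have hmA : m ≤ (A.card : ℝ) := by rw [hAcard]; exact hm2
  have hax : m * 2^n ≤ 2 * ((A.card:ℝ) * (X.card:ℝ)) := by
    have ha0 : (0:ℝ) ≤ A.card := Nat.cast_nonneg _
    have hx0 : (0:ℝ) ≤ X.card := Nat.cast_nonneg _
    have hsum : (A.card:ℝ) + X.card = 2^n := by rw [hAcard]; ring
    nlinarith [mul_nonneg (sub_nonneg.mpr hmA) hx0, mul_nonneg (sub_nonneg.mpr hm1) ha0]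
  have hsn : (0:ℝ) < Real.sqrt n :=
    Real.sqrt_pos.mpr (by exact_mod_cast Nat.lt_of_lt_of_le Nat.zero_lt_one hn)
  have hfinal : Real.sqrt 2 * m / (2 * Real.sqrt n)
      ≤ Real.sqrt 2 * A.card * X.card / ((2:ℝ)^n * Real.sqrt n) := by
    rw [div_le_div_iff₀ (by positivity) (by positivity)]
    calc Real.sqrt 2 * m * ((2:ℝ)^n * Real.sqrt n)
        = (Real.sqrt 2 * Real.sqrt n) * (m * 2^n) := by ring
      _ ≤ (Real.sqrt 2 * Real.sqrt n) * (2 * ((A.card:ℝ) * X.card)) :=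
          mul_le_mul_of_nonneg_left hax (by positivity)
      _ = Real.sqrt 2 * A.card * X.card * (2 * Real.sqrt n) := by ring
  exact hfinal.trans hchain

end HSC

open HSC Finset

/-- For all sufficiently large even `n`: if `S` is any set of
vertices of the hypercube `Q_n` with `|S| ≤ 2^(n-3)/(n ln n)`, then there is a
connected component `K` of `Q_n - S` such that the number of vertices of `Q_n` lying
outside both `S` and `K` is less than `(1/2) · C(n, n/2)`. -/
theorem hypercube_small_component :
    ∃ N : ℕ, ∀ n : ℕ, N ≤ n → Even n →
      ∀ S : Finset (Fin n → Bool),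
        (S.card : ℝ) ≤ (2 : ℝ) ^ (n - 3) / ((n : ℝ) * Real.log n) →
        ∃ K : ((hypercube n).induce {v | v ∉ S}).ConnectedComponent,
          (Set.ncard {v : {v : Fin n → Bool // v ∉ S} | v ∉ K.supp} : ℝ) <
            (1 / 2 : ℝ) * (n.choose (n / 2)) := by
  use 16
  intro n hn heven S hS
  classical
  by_contra hcon
  push_neg at hcon
  obtain ⟨k, hk⟩ := heven
  have hk8 : 8 ≤ k := by omega
  have hn1 : 1 ≤ n := by omega
  -- numerics
  have hchoose : (n.choose (n/2)) = Nat.centralBinom k := by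
    rw [Nat.centralBinom]
    congr 1 <;> omega
  set C : ℝ := (Nat.centralBinom k : ℝ) with hCdef
  have hC0 : (0:ℝ) < C := by
    rw [hCdef]; exact_mod_cast Nat.centralBinom_pos k
  set m : ℝ := C/2 with hmdef
  have hm0 : 0 < m := by rw [hmdef]; positivity
  have h2n4k : (2:ℝ)^n = 4^k := by
    rw [hk, pow_add, ← mul_pow]
    norm_num
  have hnk : (n:ℝ) = 2*k := by
    rw [hk]; push_cast; ring
  have hsqrtn : Real.sqrt n = Real.sqrt 2 * Real.sqrt k := by
    rw [hnk]
    exact Real.sqrt_mul (by norm_num) k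
  have hsk : (0:ℝ) < Real.sqrt k :=
    Real.sqrt_pos.mpr (by exact_mod_cast (by omega : 0 < k))
  have hsqk : ((4:ℝ)^k)^2 = 16^k := by
    rw [← pow_mul, mul_comm, pow_mul]; norm_num
  have hCl : (4:ℝ)^k ≤ C * (2 * Real.sqrt k) := by
    apply HSC.le_of_sq_le_sq _ (by positivity)
    have h := cb_sq_lower k (by omega)
    have hsq2 : (Real.sqrt k)^2 = (k:ℝ) := Real.sq_sqrt (Nat.cast_nonneg k)
    calc ((4:ℝ)^k)^2 = 16^k := hsqk
      _ ≤ C^2 * (4*(k:ℝ)) := h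
      _ = (C*(2*Real.sqrt k))^2 := by
          rw [mul_pow, mul_pow, hsq2]; ring
  have hCu : C ≤ (4:ℝ)^k / 4 := by
    have h := cb_sq_upper k
    have h16 : (16:ℝ) ≤ 3*(k:ℝ)+1 := by
      have : (8:ℝ) ≤ (k:ℝ) := by exact_mod_cast hk8
      linarith
    have h2 : C^2 * 16 ≤ (16:ℝ)^k :=
      le_trans (mul_le_mul_of_nonneg_left h16 (sq_nonneg C)) h
    apply HSC.le_of_sq_le_sq _ (by positivity)
    rw [div_pow, hsqk]
    rw [le_div_iff₀ (by norm_num : (0:ℝ) < (4:ℝ)^2)]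
    calc C^2 * 4^2 = C^2 * 16 := by norm_num
      _ ≤ (16:ℝ)^k := h2
  have hmle : m ≤ (2:ℝ)^n / 8 := by
    rw [hmdef, h2n4k]
    linarith
  have hlog1 : (1:ℝ) ≤ Real.log n := by
    rw [Real.le_log_iff_exp_le (by positivity)]
    calc Real.exp 1 ≤ 2.7182818286 := Real.exp_one_lt_d9.le
      _ ≤ 16 := by norm_num
      _ ≤ (n:ℝ) := by exact_mod_cast hn
  have hpow3 : (2:ℝ)^(n-3) = 4^k/8 := by
    have h1 : (2:ℝ)^(n-3) * 2^3 = 2^n := by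
      rw [← pow_add]; congr 1; omega
    rw [eq_div_iff (by norm_num : (8:ℝ) ≠ 0), ← h2n4k]
    calc (2:ℝ)^(n-3) * 8 = 2^(n-3) * 2^3 := by norm_num
      _ = 2^n := h1
  have hnln : (2:ℝ)*k ≤ (n:ℝ) * Real.log n := by
    calc (2:ℝ)*k = (n:ℝ) * 1 := by rw [hnk]; ring
      _ ≤ (n:ℝ) * Real.log n := by
          apply mul_le_mul_of_nonneg_left hlog1 (by positivity)
  have hkpos : (0:ℝ) < k := by exact_mod_cast (by omega : 0 < k)
  have hup : (S.card : ℝ) ≤ 4^k/(16*k) := by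
    calc (S.card:ℝ) ≤ 2^(n-3)/((n:ℝ)*Real.log n) := hS
      _ = (4^k/8)/((n:ℝ)*Real.log n) := by rw [hpow3]
      _ ≤ (4^k/8)/(2*(k:ℝ)) := by
          apply div_le_div_of_nonneg_left (by positivity) (by positivity) hnln
      _ = 4^k/(16*k) := by rw [div_div]; ring_nf
  -- graph setup
  set G := (hypercube n).induce {v : Fin n → Bool | v ∉ S} with hGdef
  haveI : Fintype {v : Fin n → Bool // v ∉ S} := Fintype.ofFinite _
  haveI : Fintype G.ConnectedComponent := Fintype.ofFinite _
  set f : G.ConnectedComponent → ℕ :=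
    fun K => (univ.filter
      (fun v : {v : Fin n → Bool // v ∉ S} => G.connectedComponentMk v = K)).card with hfdef
  set T : ℕ := Fintype.card {v : Fin n → Bool // v ∉ S} with hTdef
  have hT : T = ∑ K ∈ univ, f K := by
    rw [hTdef, ← Finset.card_univ]
    exact Finset.card_eq_sum_card_fiberwise (fun x _ => Finset.mem_univ _)
  have hfT : ∀ K, f K ≤ T := by
    intro K
    rw [hfdef, hTdef, ← Finset.card_univ]
    exact Finset.card_filter_le _ _
  have hTS : T + S.card = 2^n := by
    rw [hTdef, ← card_cube n]
    have h1 : Fintype.card {v : Fin n → Bool // v ∉ S}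
        = (univ.filter (fun v : Fin n → Bool => v ∉ S)).card :=
      by convert Fintype.card_subtype (fun v : Fin n → Bool => v ∉ S)
    rw [h1, Finset.filter_not, Finset.filter_univ_mem,
      Finset.card_sdiff_of_subset (Finset.subset_univ S), Finset.card_univ]
    have := Finset.card_le_univ S
    omega
  -- translation of the contradiction hypothesis
  have hKbound : ∀ K : G.ConnectedComponent, m ≤ (T:ℝ) - f K := by
    intro K
    have h1 := hcon K
    have h2 : Set.ncard {v : {v : Fin n → Bool // v ∉ S} | v ∉ K.supp} = T - f K := by
      have hset : {v : {v : Fin n → Bool // v ∉ S} | v ∉ K.supp}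
          = ({v : {v : Fin n → Bool // v ∉ S} | G.connectedComponentMk v = K} : Set _)ᶜ := by
        ext v
        simp [SimpleGraph.ConnectedComponent.mem_supp_iff]
      rw [hset, Set.ncard_eq_toFinset_card', Set.toFinset_compl, Set.toFinset_setOf,
        Finset.card_compl]
    rw [h2] at h1
    have h3 : ((T - f K : ℕ) : ℝ) = (T:ℝ) - f K := by
      rw [Nat.cast_sub (hfT K)]
    rw [h3] at h1
    have h4 : (1/2 : ℝ) * (n.choose (n/2) : ℝ) = m := by
      rw [hmdef, hCdef, hchoose]; ring
    rw [h4] at h1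
    exact h1
  -- adjacency by flips
  have hadj : ∀ (x : Fin n → Bool) (i : Fin n), (hypercube n).Adj x (flip x i) := by
    intro x i
    refine ⟨i, ?_, ?_⟩
    · simp [HSC.flip]
    · intro j hj
      simp [HSC.flip, Function.update_of_ne hj]
  have hmkflip : ∀ (x : Fin n → Bool) (hx : x ∉ S) (i : Fin n) (hf : flip x i ∉ S),
      G.connectedComponentMk ⟨x, hx⟩ = G.connectedComponentMk ⟨flip x i, hf⟩ := by
    intro x hx i hf
    apply SimpleGraph.ConnectedComponent.sound
    apply SimpleGraph.Adj.reachable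
    exact hadj x i
  -- union of components as a cube subset
  have hXF : ∀ 𝒯 : Finset G.ConnectedComponent,
      ∃ X : Finset (Fin n → Bool),
        X.card = ∑ K ∈ 𝒯, f K ∧
        (∀ x ∈ X, ∀ i : Fin n, flip x i ∉ S → flip x i ∈ X) := by
    intro 𝒯
    refine ⟨univ.filter (fun v : Fin n → Bool =>
      ∃ h : v ∉ S, G.connectedComponentMk ⟨v, h⟩ ∈ 𝒯), ?_, ?_⟩
    · -- cardinality
      have hbij : (univ.filter (fun v : Fin n → Bool =>
          ∃ h : v ∉ S, G.connectedComponentMk ⟨v, h⟩ ∈ 𝒯)).card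
          = (univ.filter (fun v : {v : Fin n → Bool // v ∉ S} =>
              G.connectedComponentMk v ∈ 𝒯)).card := by
        refine Finset.card_bij'
          (fun v hv => (⟨v, ((Finset.mem_filter.mp hv).2).choose⟩ :
            {v : Fin n → Bool // v ∉ S}))
          (fun w _ => (w : Fin n → Bool)) ?_ ?_ ?_ ?_
        · intro v hv
          simp only [Finset.mem_filter, Finset.mem_univ, true_and]
          exact ((Finset.mem_filter.mp hv).2).choose_spec
        · intro w hw
          simp only [Finset.mem_filter, Finset.mem_univ, true_and] at hw ⊢
          exact ⟨w.2, hw⟩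
        · intro v hv
          rfl
        · intro w hw
          rfl
      rw [hbij]
      rw [Finset.card_eq_sum_card_fiberwise
        (s := univ.filter (fun v : {v : Fin n → Bool // v ∉ S} => G.connectedComponentMk v ∈ 𝒯))
          (f := fun v : {v : Fin n → Bool // v ∉ S} => G.connectedComponentMk v) (t := 𝒯)
        (fun v hv => (Finset.mem_filter.mp hv).2)]
      apply Finset.sum_congr rfl
      intro K hK
      rw [hfdef, Finset.filter_filter]
      congr 1
      apply Finset.filter_congr
      intro v _
      constructor
      · exact fun h => h.2
      · intro h
        have hmem : G.connectedComponentMk v ∈ 𝒯 := by rw [h]; exact hK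
        exact ⟨hmem, h⟩
    · -- closure
      intro x hx i hfS
      obtain ⟨hxS, hmem⟩ := (Finset.mem_filter.mp hx).2
      refine Finset.mem_filter.mpr ⟨Finset.mem_univ _, hfS, ?_⟩
      rw [← hmkflip x hxS i hfS]
      exact hmem
  -- find a good union of components
  have hmain : ∃ X : Finset (Fin n → Bool),
      (∀ x ∈ X, ∀ i : Fin n, flip x i ∉ S → flip x i ∈ X) ∧
      m ≤ (X.card:ℝ) ∧ m ≤ (2:ℝ)^n - X.card := by
    have h2nTS : (T:ℝ) + S.card = 2^n := by exact_mod_cast congrArg (Nat.cast (R := ℝ)) hTS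
    by_cases hgiant : ∃ K : G.ConnectedComponent, m ≤ (f K : ℝ)
    · obtain ⟨K, hK⟩ := hgiant
      obtain ⟨X, hXcard, hXcl⟩ := hXF (univ.erase K)
      have hsume : f K + ∑ J ∈ univ.erase K, f J = ∑ J ∈ univ, f J :=
        Finset.add_sum_erase univ f (Finset.mem_univ K)
      have hXval : (X.card : ℝ) = (T:ℝ) - f K := by
        rw [hXcard]
        have h5 : ∑ J ∈ univ.erase K, f J = T - f K := by omega
        rw [h5, Nat.cast_sub (hfT K)]
      refine ⟨X, hXcl, ?_, ?_⟩
      · rw [hXval]; exact hKbound K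
      · rw [hXval]
        have hs0 : (0:ℝ) ≤ S.card := Nat.cast_nonneg _
        linarith
    · push_neg at hgiant
      have hTlarge : m ≤ ∑ K ∈ univ, ((f K):ℝ) := by
        have h6 : ∑ K ∈ univ, ((f K):ℝ) = (T:ℝ) := by
          rw [hT]; push_cast; rfl
        rw [h6]
        have hs : (S.card : ℝ) ≤ 4^k/(16*k) := hup
        have hk1 : (1:ℝ) ≤ (k:ℝ) := by exact_mod_cast (by omega : 1 ≤ k)
        have h7 : (4:ℝ)^k/(16*k) ≤ 4^k/16 := by
          apply div_le_div_of_nonneg_left (by positivity) (by norm_num)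
          linarith
        nlinarith [hmle, h2n4k]
      obtain ⟨𝒯, _, h1, h2⟩ := greedy univ f m hm0 (fun K _ => hgiant K) hTlarge
      obtain ⟨X, hXcard, hXcl⟩ := hXF 𝒯
      have hXsum : (X.card : ℝ) = ∑ K ∈ 𝒯, ((f K):ℝ) := by
        rw [hXcard]; push_cast; rfl
      refine ⟨X, hXcl, ?_, ?_⟩
      · rw [hXsum]; exact h1
      · rw [hXsum]
        have h8 : ∑ K ∈ 𝒯, ((f K):ℝ) < C := by
          rw [hmdef] at h2; linarith
        nlinarith [hCu, h2n4k, hmle]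
  obtain ⟨X, hXcl, hm1, hm2⟩ := hmain
  have hfinal := closed_bound hn1 S X hXcl m hm0.le hm1 hm2
  have heq1 : Real.sqrt 2 * m / (2 * Real.sqrt n) = C / (4 * Real.sqrt k) := by
    rw [hsqrtn, hmdef]
    have hs2 : (0:ℝ) < Real.sqrt 2 := Real.sqrt_pos.mpr (by norm_num)
    field_simp
    ring
  rw [heq1] at hfinal
  have hlow : (4:ℝ)^k / (8*k) ≤ C / (4*Real.sqrt k) := by
    rw [div_le_div_iff₀ (by positivity) (by positivity)]
    have hsq : Real.sqrt k * Real.sqrt k = (k:ℝ) := Real.mul_self_sqrt (Nat.cast_nonneg k)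
    calc (4:ℝ)^k * (4*Real.sqrt k)
        ≤ (C*(2*Real.sqrt k)) * (4*Real.sqrt k) :=
          mul_le_mul_of_nonneg_right hCl (by positivity)
      _ = C * (8 * (Real.sqrt k * Real.sqrt k)) := by ring
      _ = C * (8*(k:ℝ)) := by rw [hsq]
  have hcontra : (4:ℝ)^k/(16*k) < 4^k/(8*k) := by
    apply div_lt_div_of_pos_left (by positivity) (by positivity)
    nlinarith
  linarith
end
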